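/- arXiv:1010.4497 — 10 statements merged into one kernel-verified Lean document; each statement's English description precedes it below -/
import Mathlib

section
/- Let M = (V, D) be a proper set system and v ∈ V. Then d_{M+v} = d_M, |d_M − d_{M*v}| ≤ 1, and |d_M − d_{M∂v}| ≤ 1; that is, applying a loop complementation on v does not change the minimum cardinality of a set in the system, and applying a pivot or a dual pivot on v changes it by at most one. -/
open scoped symmDiff

variable {V : Type*} [DecidableEq V] [Fintype V]

/-- Distance from `X` to the set system with family `D`. -/
noncomputable def dSS (D : Set (Finset V)) (X : Finset V) : ℕ :=
  sInf ((fun Y => (X ∆ Y).card) '' D)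

/-- Pivot (twist) of a set-system family on `X`. -/
def pivotSS (D : Set (Finset V)) (X : Finset V) : Set (Finset V) :=
  (fun Y => Y ∆ X) '' D

/-- Loop complementation on `v`. -/
def lcSS (D : Set (Finset V)) (v : V) : Set (Finset V) :=
  D ∆ ((fun Z => Z ∪ {v}) '' {Z ∈ D | v ∉ Z})

/-- Dual pivot on `v`. -/
def dpSS (D : Set (Finset V)) (v : V) : Set (Finset V) :=
  D ∆ ((fun Z => Z \ {v}) '' {Z ∈ D | v ∈ Z})

/-- Delta-matroid: proper set system with the symmetric exchange axiom. -/
def DeltaMatroid (D : Set (Finset V)) : Prop :=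
  D.Nonempty ∧ ∀ X ∈ D, ∀ Y ∈ D, ∀ u ∈ X ∆ Y, ∃ v ∈ X ∆ Y, X ∆ {u, v} ∈ D

/-- Inclusion-minimal members. -/
def minFam (D : Set (Finset V)) : Set (Finset V) :=
  {X ∈ D | ∀ Y ∈ D, Y ⊆ X → Y = X}

/-- Inclusion-maximal members. -/
def maxFam (D : Set (Finset V)) : Set (Finset V) :=
  {X ∈ D | ∀ Y ∈ D, X ⊆ Y → Y = X}

/-- Members of minimum cardinality. -/
def minCardFam (D : Set (Finset V)) : Set (Finset V) :=
  {X ∈ D | ∀ Y ∈ D, X.card ≤ Y.card}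

/-- Members of maximum cardinality. -/
def maxCardFam (D : Set (Finset V)) : Set (Finset V) :=
  {X ∈ D | ∀ Y ∈ D, Y.card ≤ X.card}

/-- All members have the same cardinality. -/
def Equicardinal (F : Set (Finset V)) : Prop :=
  ∀ X ∈ F, ∀ Y ∈ F, X.card = Y.card

/-- Restriction of the family to subsets of `X`. -/
def restrictSS (D : Set (Finset V)) (X : Finset V) : Set (Finset V) :=
  {Y ∈ D | Y ⊆ X}


lemma cardSD_le (A B : Finset V) : (A ∆ B).card ≤ A.card + B.card := by
  refine le_trans (Finset.card_le_card ?_) (Finset.card_union_le A B)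
  intro x hx
  rw [Finset.mem_symmDiff] at hx
  simp only [Finset.mem_union]
  tauto

lemma dSS_empty (D : Set (Finset V)) : dSS D ∅ = sInf ((fun Y : Finset V => Y.card) '' D) := by
  have h : (fun Y : Finset V => ((∅ : Finset V) ∆ Y).card) = fun Y : Finset V => Y.card := by
    funext Y
    rw [show (∅ : Finset V) ∆ Y = Y from by simp [← Finset.bot_eq_empty]]
  rw [dSS, h]

lemma dSS_le_card {D : Set (Finset V)} {X : Finset V} (hX : X ∈ D) : dSS D ∅ ≤ X.card := by
  rw [dSS_empty]; exact Nat.sInf_le ⟨X, hX, rfl⟩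

lemma exists_card_eq_dSS {D : Set (Finset V)} (hD : D.Nonempty) :
    ∃ X ∈ D, X.card = dSS D ∅ := by
  rw [dSS_empty]
  obtain ⟨X, hX, hc⟩ := Nat.sInf_mem (hD.image (fun Y : Finset V => Y.card))
  exact ⟨X, hX, hc⟩

lemma dSS_eq_of {E : Set (Finset V)} {m : ℕ} (h1 : ∃ X ∈ E, X.card ≤ m)
    (h2 : ∀ X ∈ E, m ≤ X.card) : dSS E ∅ = m := by
  obtain ⟨X, hX, hXm⟩ := h1
  have hle : dSS E ∅ ≤ m := le_trans (dSS_le_card hX) hXm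
  have hge : m ≤ dSS E ∅ := by
    rw [dSS_empty]
    refine le_csInf ⟨X.card, ⟨X, hX, rfl⟩⟩ ?_
    rintro n ⟨Y, hY, rfl⟩
    exact h2 Y hY
  omega

/-- loop complementation preserves `d_M`; pivot and dual pivot on a
single element change it by at most one. -/
theorem dist_vertex_flip_le_one (D : Set (Finset V)) (hD : D.Nonempty) (v : V) :
    dSS (lcSS D v) ∅ = dSS D ∅ ∧
    |(dSS D ∅ : ℤ) - (dSS (pivotSS D {v}) ∅ : ℤ)| ≤ 1 ∧
    |(dSS D ∅ : ℤ) - (dSS (dpSS D v) ∅ : ℤ)| ≤ 1 := by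
  classical
  set m := dSS D ∅ with hm
  obtain ⟨X, hXD, hXcard⟩ := exists_card_eq_dSS hD
  -- Part 1: loop complementation
  have part1 : dSS (lcSS D v) ∅ = m := by
    refine dSS_eq_of ⟨X, ?_, le_of_eq hXcard⟩ ?_
    · rw [lcSS, Set.mem_symmDiff]
      left
      refine ⟨hXD, ?_⟩
      rintro ⟨Z, ⟨hZD, hvZ⟩, hEq⟩
      by_cases hv : v ∈ X
      · have hcard : X.card = Z.card + 1 := by
          rw [← hEq, Finset.card_union_of_disjoint (Finset.disjoint_singleton_right.mpr hvZ),
            Finset.card_singleton]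
        have := dSS_le_card hZD
        omega
      · exact hv (hEq ▸ Finset.mem_union_right _ (Finset.mem_singleton_self v))
    · intro W hW
      rw [lcSS, Set.mem_symmDiff] at hW
      rcases hW with ⟨hWD, _⟩ | ⟨⟨Z, ⟨hZD, _⟩, hEq⟩, _⟩
      · exact dSS_le_card hWD
      · calc m ≤ Z.card := dSS_le_card hZD
          _ ≤ W.card := by
            rw [← hEq]; exact Finset.card_le_card Finset.subset_union_left
  -- Part 2: pivot
  have hpne : (pivotSS D {v}).Nonempty := hD.image _
  obtain ⟨W, hWp, hWcard⟩ := exists_card_eq_dSS hpne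
  have h2a : dSS (pivotSS D {v}) ∅ ≤ m + 1 := by
    have hmem : X ∆ {v} ∈ pivotSS D {v} := ⟨X, hXD, rfl⟩
    calc dSS (pivotSS D {v}) ∅ ≤ (X ∆ {v}).card := dSS_le_card hmem
      _ ≤ X.card + 1 := by simpa using cardSD_le X {v}
      _ = m + 1 := by rw [hXcard]
  have h2b : m ≤ dSS (pivotSS D {v}) ∅ + 1 := by
    obtain ⟨Y, hYD, hYEq⟩ := hWp
    have hY : Y = W ∆ {v} := by
      rw [← hYEq, symmDiff_assoc, symmDiff_self, symmDiff_bot]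
    calc m ≤ Y.card := dSS_le_card hYD
      _ ≤ W.card + 1 := by rw [hY]; simpa using cardSD_le W {v}
      _ = _ := by rw [hWcard]
  -- Part 3: dual pivot
  have h3a : ∃ W ∈ dpSS D v, W.card ≤ m + 1 := by
    by_cases hv : v ∈ X
    · refine ⟨X, ?_, by omega⟩
      rw [dpSS, Set.mem_symmDiff]
      left
      refine ⟨hXD, ?_⟩
      rintro ⟨Z, ⟨_, hvZ⟩, hEq⟩
      have : v ∉ Z \ {v} := by simp
      dsimp only at hEq
      rw [hEq] at this
      exact this hv
    · by_cases hX' : X ∪ {v} ∈ D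
      · refine ⟨X ∪ {v}, ?_, ?_⟩
        · rw [dpSS, Set.mem_symmDiff]
          left
          refine ⟨hX', ?_⟩
          rintro ⟨Z, ⟨_, hvZ⟩, hEq⟩
          have hvn : v ∉ Z \ {v} := by simp
          dsimp only at hEq
          rw [hEq] at hvn
          exact hvn (Finset.mem_union_right _ (Finset.mem_singleton_self v))
        · rw [Finset.card_union_of_disjoint (Finset.disjoint_singleton_right.mpr hv),
            Finset.card_singleton, hXcard]
      · refine ⟨X, ?_, by omega⟩
        rw [dpSS, Set.mem_symmDiff]
        left
        refine ⟨hXD, ?_⟩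
        rintro ⟨Z, ⟨hZD, hvZ⟩, hEq⟩
        have hZX : X ∪ {v} = Z := by
          rw [← hEq, Finset.sdiff_union_of_subset (Finset.singleton_subset_iff.mpr hvZ)]
        exact hX' (hZX ▸ hZD)
  have h3b : ∀ W ∈ dpSS D v, m ≤ W.card + 1 := by
    intro W hW
    rw [dpSS, Set.mem_symmDiff] at hW
    rcases hW with ⟨hWD, _⟩ | ⟨⟨Z, ⟨hZD, hvZ⟩, hEq⟩, _⟩
    · have := dSS_le_card hWD; omega
    · have hZpos : 1 ≤ Z.card := Finset.card_pos.mpr ⟨v, hvZ⟩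
      have hZc : (Z \ {v}).card = Z.card - 1 := by
        rw [Finset.card_sdiff_of_subset (Finset.singleton_subset_iff.mpr hvZ), Finset.card_singleton]
      have hmZ := dSS_le_card hZD
      dsimp only at hEq
      rw [hEq] at hZc
      omega
  obtain ⟨W3, hW3, hW3c⟩ := h3a
  have h3le : dSS (dpSS D v) ∅ ≤ m + 1 := le_trans (dSS_le_card hW3) hW3c
  have h3ge : m ≤ dSS (dpSS D v) ∅ + 1 := by
    obtain ⟨W4, hW4, hW4c⟩ := exists_card_eq_dSS ⟨W3, hW3⟩
    have := h3b W4 hW4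
    omega
  refine ⟨part1, ?_, ?_⟩ <;> rw [abs_le] <;> constructor <;> push_cast <;> omega
end

section
/- Let M = (V, D) be a proper set system, v ∈ V, and set m = min(d_M, d_{M*v}). Then d_{M∂v} ∈ {m, m+1}, and likewise d_{M*v} ∈ {d_M − 1, d_M, d_M + 1} with both d_M and d_{M*v} lying in {m, m+1}. In particular, the three values d_M, d_{M*v}, d_{M∂v} cannot be pairwise distinct. -/
open scoped symmDiff

variable {V : Type*} [DecidableEq V] [Fintype V]

lemma dSS_le' (D : Set (Finset V)) {Y : Finset V} (hY : Y ∈ D) : dSS D ∅ ≤ Y.card := by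
  have : Y.card ∈ (fun Y => ((∅:Finset V) ∆ Y).card) '' D := ⟨Y, hY, by simp [symmDiff_def]⟩
  exact Nat.sInf_le this

lemma dSS_exists (D : Set (Finset V)) (hD : D.Nonempty) : ∃ Y ∈ D, Y.card = dSS D ∅ := by
  obtain ⟨Y, hY, hc⟩ := Nat.sInf_mem (hD.image (fun Y => ((∅:Finset V) ∆ Y).card))
  refine ⟨Y, hY, ?_⟩
  rw [dSS, ← hc]
  simp [symmDiff_def]

lemma card_sd_mem {Y : Finset V} {v : V} (h : v ∈ Y) : (Y ∆ {v}).card + 1 = Y.card := by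
  have he : Y ∆ {v} = Y.erase v := by
    ext x
    simp only [Finset.mem_symmDiff, Finset.mem_singleton, Finset.mem_erase]
    constructor
    · rintro (⟨hx, hne⟩ | ⟨rfl, hx⟩) <;> tauto
    · rintro ⟨hne, hx⟩; tauto
  rw [he, Finset.card_erase_add_one h]

lemma card_sd_notMem {Y : Finset V} {v : V} (h : v ∉ Y) : (Y ∆ {v}).card = Y.card + 1 := by
  have he : Y ∆ {v} = insert v Y := by
    ext x
    simp only [Finset.mem_symmDiff, Finset.mem_singleton, Finset.mem_insert]
    constructor
    · rintro (⟨hx, hne⟩ | ⟨rfl, hx⟩) <;> tauto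
    · rintro (rfl | hx)
      · tauto
      · exact Or.inl ⟨hx, fun hxv => h (hxv ▸ hx)⟩
  rw [he, Finset.card_insert_of_notMem h]

lemma mem_dp_of_mem {D : Set (Finset V)} {v : V} {Y : Finset V} (hY : Y ∈ D) (hv : v ∈ Y) :
    Y ∈ dpSS D v := by
  rw [dpSS, Set.mem_symmDiff]
  left
  refine ⟨hY, ?_⟩
  rintro ⟨Z, hZ, rfl⟩
  exact absurd hv (by simp)

/-- with `m = min(d_M, d_{M*v})`, all three of `d_M`, `d_{M*v}`,
`d_{M∂v}` lie in `{m, m+1}`; moreover `|d_M - d_{M*v}| ≤ 1` and the three values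
cannot be pairwise distinct. -/
theorem dist_dual_pivot_min (D : Set (Finset V)) (hD : D.Nonempty) (v : V) :
    (dSS (dpSS D v) ∅ = min (dSS D ∅) (dSS (pivotSS D {v}) ∅) ∨
     dSS (dpSS D v) ∅ = min (dSS D ∅) (dSS (pivotSS D {v}) ∅) + 1) ∧
    (dSS D ∅ = min (dSS D ∅) (dSS (pivotSS D {v}) ∅) ∨
     dSS D ∅ = min (dSS D ∅) (dSS (pivotSS D {v}) ∅) + 1) ∧
    (dSS (pivotSS D {v}) ∅ = min (dSS D ∅) (dSS (pivotSS D {v}) ∅) ∨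
     dSS (pivotSS D {v}) ∅ = min (dSS D ∅) (dSS (pivotSS D {v}) ∅) + 1) ∧
    |(dSS D ∅ : ℤ) - (dSS (pivotSS D {v}) ∅ : ℤ)| ≤ 1 ∧
    ¬(dSS D ∅ ≠ dSS (pivotSS D {v}) ∅ ∧ dSS D ∅ ≠ dSS (dpSS D v) ∅ ∧
      dSS (pivotSS D {v}) ∅ ≠ dSS (dpSS D v) ∅) := by
  set a := dSS D ∅ with ha
  set b := dSS (pivotSS D {v}) ∅ with hb
  set c := dSS (dpSS D v) ∅ with hc
  have hPne : (pivotSS D {v}).Nonempty := hD.image _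
  -- b ≤ a + 1
  obtain ⟨Y₀, hY₀, hY₀c⟩ := dSS_exists D hD
  have hba : b ≤ a + 1 := by
    have hm : Y₀ ∆ {v} ∈ pivotSS D {v} := ⟨Y₀, hY₀, rfl⟩
    have := dSS_le' _ hm
    by_cases hv : v ∈ Y₀
    · have := card_sd_mem hv; omega
    · have := card_sd_notMem hv; omega
  -- a ≤ b + 1
  obtain ⟨Z₀, hZ₀, hZ₀c⟩ := dSS_exists _ hPne
  have hab : a ≤ b + 1 := by
    obtain ⟨W, hW, rfl⟩ := hZ₀
    beta_reduce at hZ₀c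
    have := dSS_le' D hW
    by_cases hv : v ∈ W
    · have := card_sd_mem hv; omega
    · have := card_sd_notMem hv; omega
  -- c ≤ min a b + 1, including nonemptiness of dpSS
  have hcub : c ≤ min a b + 1 := by
    rcases le_total a b with hmin | hmin
    · rw [min_eq_left hmin]
      by_cases hv : v ∈ Y₀
      · have := dSS_le' _ (mem_dp_of_mem hY₀ hv); omega
      · by_cases hE : Y₀ ∈ dpSS D v
        · have := dSS_le' _ hE; omega
        · have hIm : Y₀ ∈ (fun Z => Z \ {v}) '' {Z ∈ D | v ∈ Z} := by
            rw [dpSS, Set.mem_symmDiff] at hE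
            by_contra h; exact hE (Or.inl ⟨hY₀, h⟩)
          obtain ⟨Z, ⟨hZD, hZv⟩, hZeq⟩ := hIm
          beta_reduce at hZeq
          have hZE := mem_dp_of_mem hZD hZv
          have hle := dSS_le' _ hZE
          have hcard : Z.card ≤ Y₀.card + 1 := by
            have : Z ⊆ insert v Y₀ := by
              intro x hx
              rcases eq_or_ne x v with rfl | hne
              · simp
              · have : x ∈ Z \ {v} := by simp [hx, hne]
                rw [hZeq] at this
                simp [this]
            calc Z.card ≤ (insert v Y₀).card := Finset.card_le_card this
              _ ≤ Y₀.card + 1 := Finset.card_insert_le _ _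
          omega
    · rw [min_eq_right hmin]
      obtain ⟨W, hW, rfl⟩ := hZ₀
      beta_reduce at hZ₀c
      by_cases hv : v ∈ W
      · have := dSS_le' _ (mem_dp_of_mem hW hv)
        have := card_sd_mem hv
        have := dSS_le' D hW
        omega
      · have h1 := card_sd_notMem hv
        have h2 := dSS_le' D hW
        omega
  -- dpSS nonempty
  have hEne : (dpSS D v).Nonempty := by
    by_contra h
    rw [Set.not_nonempty_iff_eq_empty] at h
    have : c = 0 := by rw [hc, h, dSS]; simp
    -- need a member; derive contradiction differently: redo membership
    rcases le_total a b with hmin | hmin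
    · by_cases hv : v ∈ Y₀
      · exact absurd (mem_dp_of_mem hY₀ hv) (by simp [h])
      · by_cases hE : Y₀ ∈ dpSS D v
        · simp [h] at hE
        · have hIm : Y₀ ∈ (fun Z => Z \ {v}) '' {Z ∈ D | v ∈ Z} := by
            rw [dpSS, Set.mem_symmDiff] at hE
            by_contra h'; exact hE (Or.inl ⟨hY₀, h'⟩)
          obtain ⟨Z, ⟨hZD, hZv⟩, _⟩ := hIm
          exact absurd (mem_dp_of_mem hZD hZv) (by simp [h])
    · by_cases hv : v ∈ Y₀
      · exact absurd (mem_dp_of_mem hY₀ hv) (by simp [h])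
      · by_cases hE : Y₀ ∈ dpSS D v
        · simp [h] at hE
        · have hIm : Y₀ ∈ (fun Z => Z \ {v}) '' {Z ∈ D | v ∈ Z} := by
            rw [dpSS, Set.mem_symmDiff] at hE
            by_contra h'; exact hE (Or.inl ⟨hY₀, h'⟩)
          obtain ⟨Z, ⟨hZD, hZv⟩, _⟩ := hIm
          exact absurd (mem_dp_of_mem hZD hZv) (by simp [h])
  -- c ≥ min a b
  have hclb : min a b ≤ c := by
    obtain ⟨W, hW, hWc⟩ := dSS_exists _ hEne
    rw [dpSS, Set.mem_symmDiff] at hW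
    rcases hW with ⟨hWD, _⟩ | ⟨hWIm, _⟩
    · have := dSS_le' D hWD; omega
    · obtain ⟨Z, ⟨hZD, hZv⟩, rfl⟩ := hWIm
      beta_reduce at hWc
      have hmem : Z ∆ {v} ∈ pivotSS D {v} := ⟨Z, hZD, rfl⟩
      have heq : Z ∆ {v} = Z \ {v} := by
        ext x
        simp only [Finset.mem_symmDiff, Finset.mem_singleton, Finset.mem_sdiff]
        constructor
        · rintro (⟨hx, hne⟩ | ⟨rfl, hx⟩) <;> tauto
        · rintro ⟨hx, hne⟩; tauto
      have := dSS_le' _ hmem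
      rw [heq] at this
      omega
  refine ⟨?_, ?_, ?_, ?_, ?_⟩
  · omega
  · omega
  · omega
  · rw [abs_le]; constructor <;> [skip; skip] <;> push_cast <;> omega
  · omega
end

section
/- Let M = (V, D) be a proper set system and v ∈ V. If d_M < d_{M*v}, then the family of minimum-cardinality sets of M∂v equals the family of minimum-cardinality sets of M; if d_{M*v} < d_M, then the family of minimum-cardinality sets of M∂v equals that of M*v. In either case, no minimum-cardinality set of M∂v contains v, and d_{M∂v} = min(d_M, d_{M*v}). -/
open scoped symmDiff

variable {V : Type*} [DecidableEq V] [Fintype V]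

/-- if `d_M < d_{M*v}` then `min_card(M∂v) = min_card(M)`;
if `d_{M*v} < d_M` then `min_card(M∂v) = min_card(M*v)`.  In either case no
minimum-cardinality set of `M∂v` contains `v` and `d_{M∂v} = min(d_M, d_{M*v})`. -/
theorem minCard_dual_pivot (D : Set (Finset V)) (hD : D.Nonempty) (v : V) :
    (dSS D ∅ < dSS (pivotSS D {v}) ∅ → minCardFam (dpSS D v) = minCardFam D) ∧
    (dSS (pivotSS D {v}) ∅ < dSS D ∅ →
      minCardFam (dpSS D v) = minCardFam (pivotSS D {v})) ∧
    (dSS D ∅ ≠ dSS (pivotSS D {v}) ∅ →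
      (∀ Z ∈ minCardFam (dpSS D v), v ∉ Z) ∧
      dSS (dpSS D v) ∅ = min (dSS D ∅) (dSS (pivotSS D {v}) ∅)) := by
  classical
  have hsym_mem : ∀ (Y : Finset V), v ∈ Y → Y ∆ {v} = Y.erase v := by
    intro Y h; ext x; simp [Finset.mem_symmDiff]; aesop
  have hsym_not : ∀ (Y : Finset V), v ∉ Y → Y ∆ {v} = insert v Y := by
    intro Y h; ext x; simp [Finset.mem_symmDiff]; aesop
  have hdSS : ∀ (F : Set (Finset V)), dSS F ∅ = sInf ((fun Y : Finset V => Y.card) '' F) := by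
    intro F
    have h : (fun Y : Finset V => ((∅ : Finset V) ∆ Y).card) = fun Y : Finset V => Y.card := by
      funext Y; rw [show ((∅ : Finset V) ∆ Y) = Y by simp]
    rw [dSS, h]
  set d := dSS D ∅ with hd
  set dp := dSS (pivotSS D {v}) ∅ with hdp
  have hdval : d = sInf ((fun Y : Finset V => Y.card) '' D) := hdSS D
  have hdpval : dp = sInf ((fun Y : Finset V => (Y ∆ {v}).card) '' D) := by
    rw [hdp, hdSS, pivotSS, Set.image_image]
  have hd_le : ∀ Y ∈ D, d ≤ Y.card := by
    intro Y hY; rw [hdval]; exact Nat.sInf_le ⟨Y, hY, rfl⟩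
  obtain ⟨Y0, hY0D, hY0card⟩ : ∃ Y ∈ D, Y.card = d := by
    obtain ⟨Y, hY, hYeq⟩ := Nat.sInf_mem (hD.image (fun Y : Finset V => Y.card))
    exact ⟨Y, hY, by rw [hdval]; exact hYeq⟩
  have hp_le : ∀ Y ∈ D, dp ≤ (Y ∆ {v}).card := by
    intro Y hY; rw [hdpval]; exact Nat.sInf_le ⟨Y, hY, rfl⟩
  obtain ⟨Z0, hZ0D, hZ0card⟩ : ∃ Y ∈ D, (Y ∆ {v}).card = dp := by
    obtain ⟨Y, hY, hYeq⟩ := Nat.sInf_mem (hD.image (fun Y : Finset V => (Y ∆ {v}).card))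
    exact ⟨Y, hY, by rw [hdpval]; exact hYeq⟩
  set E : Set (Finset V) := (fun Z => Z \ {v}) '' {Z ∈ D | v ∈ Z} with hE
  have hdpSSdef : dpSS D v = D ∆ E := rfl
  have hE_card : ∀ W ∈ E, dp ≤ W.card ∧ v ∉ W := by
    rintro W ⟨Z, ⟨hZD, hvZ⟩, rfl⟩
    dsimp only
    have h1 : Z \ {v} = Z.erase v := Finset.sdiff_singleton_eq_erase v Z
    have h2 : Z ∆ {v} = Z.erase v := hsym_mem Z hvZ
    constructor
    · have := hp_le Z hZD; rw [h2] at this; rw [h1]; exact this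
    · rw [h1]; exact Finset.notMem_erase v Z
  -- Case A : d < dp
  have hA : d < dp → minCardFam (dpSS D v) = minCardFam D ∧
      dSS (dpSS D v) ∅ = d ∧ ∀ W ∈ minCardFam (dpSS D v), v ∉ W := by
    intro hlt
    have hnv : ∀ Y ∈ D, Y.card = d → v ∉ Y := by
      intro Y hY hYc hvY
      have h2 := hp_le Y hY
      rw [hsym_mem Y hvY, Finset.card_erase_of_mem hvY, hYc] at h2
      have hd1 : 0 < d := by rw [← hYc]; exact Finset.card_pos.mpr ⟨v, hvY⟩
      omega
    have hY0notE : Y0 ∉ E := fun h => by have := (hE_card Y0 h).1; omega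
    have hY0dp : Y0 ∈ dpSS D v := Set.mem_symmDiff.mpr (Or.inl ⟨hY0D, hY0notE⟩)
    have hlb : ∀ W ∈ dpSS D v, d ≤ W.card := by
      intro W hW
      rcases Set.mem_symmDiff.mp hW with ⟨h1, _⟩ | ⟨h1, _⟩
      · exact hd_le W h1
      · have := (hE_card W h1).1; omega
    have hmain : minCardFam (dpSS D v) = minCardFam D := by
      ext W
      constructor
      · rintro ⟨hW, hWmin⟩
        have hWd : W.card = d :=
          le_antisymm (hY0card ▸ hWmin Y0 hY0dp) (hlb W hW)
        have hWnotE : W ∉ E := fun h => by have := (hE_card W h).1; omega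
        have hWD : W ∈ D := by
          rcases Set.mem_symmDiff.mp hW with ⟨h1, _⟩ | ⟨h1, _⟩
          · exact h1
          · exact absurd h1 hWnotE
        exact ⟨hWD, fun Y hY => hWd ▸ hd_le Y hY⟩
      · rintro ⟨hWD, hWmin⟩
        have hWd : W.card = d := le_antisymm (hY0card ▸ hWmin Y0 hY0D) (hd_le W hWD)
        have hWnotE : W ∉ E := fun h => by have := (hE_card W h).1; omega
        exact ⟨Set.mem_symmDiff.mpr (Or.inl ⟨hWD, hWnotE⟩),
          fun Z hZ => hWd ▸ hlb Z hZ⟩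
    refine ⟨hmain, ?_, ?_⟩
    · rw [hdSS]
      apply le_antisymm
      · exact hY0card ▸ Nat.sInf_le ⟨Y0, hY0dp, rfl⟩
      · obtain ⟨W, hW, hWeq⟩ :=
          Nat.sInf_mem ((Set.nonempty_of_mem hY0dp).image (fun Y : Finset V => Y.card))
        rw [← hWeq]; exact hlb W hW
    · intro W hW
      rw [hmain] at hW
      obtain ⟨hWD, hWmin⟩ := hW
      exact hnv W hWD (le_antisymm (hY0card ▸ hWmin Y0 hY0D) (hd_le W hWD))
  -- Case B : dp < d
  have hB : dp < d → minCardFam (dpSS D v) = minCardFam (pivotSS D {v}) ∧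
      dSS (dpSS D v) ∅ = dp ∧ ∀ W ∈ minCardFam (dpSS D v), v ∉ W := by
    intro hlt
    have hvZ0 : v ∈ Z0 := by
      by_contra h
      rw [hsym_not Z0 h, Finset.card_insert_of_notMem h] at hZ0card
      have := hd_le Z0 hZ0D; omega
    have hZ0e : Z0.card - 1 = dp := by
      rw [hsym_mem Z0 hvZ0, Finset.card_erase_of_mem hvZ0] at hZ0card; exact hZ0card
    have hW0E : Z0 \ {v} ∈ E := ⟨Z0, ⟨hZ0D, hvZ0⟩, rfl⟩
    have hW0card : (Z0 \ {v}).card = dp := by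
      rw [Finset.sdiff_singleton_eq_erase, Finset.card_erase_of_mem hvZ0]; exact hZ0e
    have hW0notD : Z0 \ {v} ∉ D := fun h => by have := hd_le _ h; omega
    have hW0dp : Z0 \ {v} ∈ dpSS D v := Set.mem_symmDiff.mpr (Or.inr ⟨hW0E, hW0notD⟩)
    have hlb : ∀ W ∈ dpSS D v, dp ≤ W.card := by
      intro W hW
      rcases Set.mem_symmDiff.mp hW with ⟨h1, _⟩ | ⟨h1, _⟩
      · have := hd_le W h1; omega
      · exact (hE_card W h1).1
    have hp_le' : ∀ X ∈ pivotSS D {v}, dp ≤ X.card := by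
      rintro X ⟨Y, hY, rfl⟩; exact hp_le Y hY
    have hmemE : ∀ W ∈ minCardFam (dpSS D v), W ∈ E ∧ W.card = dp := by
      rintro W ⟨hW, hWmin⟩
      have hWd : W.card = dp := le_antisymm (hW0card ▸ hWmin _ hW0dp) (hlb W hW)
      have hWnotD : W ∉ D := fun h => by have := hd_le W h; omega
      rcases Set.mem_symmDiff.mp hW with ⟨h1, _⟩ | ⟨h1, _⟩
      · exact absurd h1 hWnotD
      · exact ⟨h1, hWd⟩
    have hmain : minCardFam (dpSS D v) = minCardFam (pivotSS D {v}) := by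
      ext W
      constructor
      · intro hW
        obtain ⟨⟨Z, ⟨hZD, hvZ⟩, rfl⟩, hWd⟩ := hmemE W hW
        refine ⟨⟨Z, hZD, ?_⟩, fun X hX => hWd ▸ hp_le' X hX⟩
        show Z ∆ {v} = Z \ {v}
        rw [hsym_mem Z hvZ, Finset.sdiff_singleton_eq_erase]
      · rintro ⟨⟨Y, hYD, rfl⟩, hWmin⟩
        have hWd : (Y ∆ {v}).card = dp :=
          le_antisymm (hZ0card ▸ hWmin _ ⟨Z0, hZ0D, rfl⟩) (hp_le Y hYD)
        have hvY : v ∈ Y := by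
          by_contra h
          rw [hsym_not Y h, Finset.card_insert_of_notMem h] at hWd
          have := hd_le Y hYD; omega
        have heq : Y ∆ {v} = Y \ {v} := by
          rw [hsym_mem Y hvY, Finset.sdiff_singleton_eq_erase]
        have hWE : Y ∆ {v} ∈ E := by rw [heq]; exact ⟨Y, ⟨hYD, hvY⟩, rfl⟩
        have hWnotD : Y ∆ {v} ∉ D := fun h => by have := hd_le _ h; omega
        exact ⟨Set.mem_symmDiff.mpr (Or.inr ⟨hWE, hWnotD⟩),
          fun Z hZ => hWd ▸ hlb Z hZ⟩
    refine ⟨hmain, ?_, ?_⟩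
    · rw [hdSS]
      apply le_antisymm
      · exact hW0card ▸ Nat.sInf_le ⟨Z0 \ {v}, hW0dp, rfl⟩
      · obtain ⟨W, hW, hWeq⟩ :=
          Nat.sInf_mem ((Set.nonempty_of_mem hW0dp).image (fun Y : Finset V => Y.card))
        rw [← hWeq]; exact hlb W hW
    · intro W hW
      exact (hE_card W (hmemE W hW).1).2
  refine ⟨fun h => (hA h).1, fun h => (hB h).1, fun hne => ?_⟩
  rcases lt_or_gt_of_ne hne with h | h
  · exact ⟨(hA h).2.2, by rw [(hA h).2.1, min_eq_left h.le]⟩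
  · exact ⟨(hB h).2.2, by rw [(hB h).2.1, min_eq_right h.le]⟩
end

section
/- Let M = (V, D) be a proper set system. Then M is a delta-matroid if and only if M is isodistant, i.e., for every X ⊆ V the family of inclusion-minimal sets of M*X is equicardinal (equivalently, every inclusion-minimal set of M*X has cardinality d_M(X)). -/
open scoped symmDiff

variable {V : Type*} [DecidableEq V] [Fintype V]

lemma pivot_dm {D : Set (Finset V)} (h : DeltaMatroid D) (X : Finset V) :
    DeltaMatroid (pivotSS D X) := by
  obtain ⟨hne, hex⟩ := h
  constructor
  · exact hne.image _
  · rintro _ ⟨A, hA, rfl⟩ _ ⟨B, hB, rfl⟩ u hu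
    have hAB : (A ∆ X) ∆ (B ∆ X) = A ∆ B := by
      ext x; simp [Finset.mem_symmDiff]; tauto
    rw [hAB] at hu ⊢
    obtain ⟨v, hv, hmem⟩ := hex A hA B hB u hu
    refine ⟨v, hv, ⟨A ∆ {u, v}, hmem, ?_⟩⟩
    ext x; simp [Finset.mem_symmDiff]; tauto

/-- In a delta-matroid, an inclusion-minimal member has minimum cardinality. -/
lemma min_card_of_minimal {D : Set (Finset V)} (h : DeltaMatroid D)
    {Z : Finset V} (hZ : Z ∈ minFam D) : ∀ W ∈ D, Z.card ≤ W.card := by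
  obtain ⟨hZD, hZmin⟩ := hZ
  have key : ∀ n : ℕ, ∀ W ∈ D, (W \ Z).card ≤ n → Z.card ≤ W.card := by
    intro n
    induction n with
    | zero =>
      intro W hW hc
      have hsub : W ⊆ Z := by
        intro x hx
        by_contra hxz
        have : x ∈ W \ Z := Finset.mem_sdiff.mpr ⟨hx, hxz⟩
        have := Finset.card_pos.mpr ⟨x, this⟩
        omega
      rw [hZmin W hW hsub]
    | succ n ih =>
      intro W hW hc
      by_cases hsub : W ⊆ Z
      · rw [hZmin W hW hsub]
      · obtain ⟨u, hu⟩ : (W \ Z).Nonempty := by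
          rw [Finset.sdiff_nonempty]; exact hsub
        have huW : u ∈ W := (Finset.mem_sdiff.mp hu).1
        have huZ : u ∉ Z := (Finset.mem_sdiff.mp hu).2
        have huXY : u ∈ W ∆ Z := Finset.mem_symmDiff.mpr (Or.inl ⟨huW, huZ⟩)
        obtain ⟨v, hv, hW'⟩ := h.2 W hW Z hZD u huXY
        set W' := W ∆ {u, v} with hW'def
        -- card W' ≤ card W
        have hcard : W'.card ≤ W.card := by
          have hsub' : W' ⊆ insert v (W.erase u) := by
            intro x hx
            rw [hW'def, Finset.mem_symmDiff] at hx
            rcases hx with ⟨hxW, hxuv⟩ | ⟨hxuv, hxW⟩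
            · refine Finset.mem_insert.mpr (Or.inr (Finset.mem_erase.mpr ⟨?_, hxW⟩))
              intro h'; exact hxuv (by rw [h']; exact Finset.mem_insert_self _ _)
            · rcases Finset.mem_insert.mp hxuv with rfl | h'
              · exact absurd huW hxW
              · rw [Finset.mem_singleton] at h'
                exact Finset.mem_insert.mpr (Or.inl h')
          calc W'.card ≤ (insert v (W.erase u)).card := Finset.card_le_card hsub'
            _ ≤ (W.erase u).card + 1 := Finset.card_insert_le _ _
            _ = W.card := by
                have : 0 < W.card := Finset.card_pos.mpr ⟨u, huW⟩
                rw [Finset.card_erase_of_mem huW]; omega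
        -- W' \ Z ⊆ (W \ Z).erase u
        have hsd : W' \ Z ⊆ (W \ Z).erase u := by
          intro x hx
          rw [Finset.mem_sdiff] at hx
          obtain ⟨hxW', hxZ⟩ := hx
          rw [hW'def, Finset.mem_symmDiff] at hxW'
          rcases hxW' with ⟨hxW, hxuv⟩ | ⟨hxuv, hxW⟩
          · refine Finset.mem_erase.mpr ⟨?_, Finset.mem_sdiff.mpr ⟨hxW, hxZ⟩⟩
            intro h'; exact hxuv (by rw [h']; exact Finset.mem_insert_self _ _)
          · exfalso
            rcases Finset.mem_insert.mp hxuv with rfl | h'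
            · exact hxW huW
            · rw [Finset.mem_singleton] at h'
              subst h'
              rw [Finset.mem_symmDiff] at hv
              rcases hv with ⟨h1, _⟩ | ⟨h1, _⟩
              · exact hxW h1
              · exact hxZ h1
        have hlt : (W' \ Z).card ≤ n := by
          have h1 : (W' \ Z).card ≤ ((W \ Z).erase u).card := Finset.card_le_card hsd
          have h2 : ((W \ Z).erase u).card = (W \ Z).card - 1 :=
            Finset.card_erase_of_mem hu
          have h3 : 0 < (W \ Z).card := Finset.card_pos.mpr ⟨u, hu⟩
          omega
        exact le_trans (ih W' hW' hlt) hcard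
  intro W hW
  exact key (W \ Z).card W hW le_rfl

/-- a proper set system is a delta-matroid iff it is isodistant,
i.e. for every `X` the inclusion-minimal sets of `M*X` are equicardinal. -/
theorem deltaMatroid_iff_isodistant (D : Set (Finset V)) (hD : D.Nonempty) :
    DeltaMatroid D ↔ ∀ X : Finset V, Equicardinal (minFam (pivotSS D X)) := by
  constructor
  · intro h X Z1 hZ1 Z2 hZ2
    have h' := pivot_dm h X
    exact le_antisymm (min_card_of_minimal h' hZ1 Z2 hZ2.1)
      (min_card_of_minimal h' hZ2 Z1 hZ1.1)
  · intro h
    refine ⟨hD, ?_⟩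
    intro X hX Y hY u hu
    by_contra hcon
    push_neg at hcon
    set X' := X ∆ {u} with hX'def
    set D' := pivotSS D X' with hD'def
    have hu' := Finset.mem_symmDiff.mp hu
    -- {u} ∈ D'
    have h1 : ({u} : Finset V) ∈ D' := by
      refine ⟨X, hX, ?_⟩
      ext x; simp [hX'def, Finset.mem_symmDiff]
    -- ∅ ∉ D'
    have hempty : (∅ : Finset V) ∉ D' := by
      rintro ⟨Z, hZ, hZeq⟩
      have hZX : Z = X' := by
        rw [← Finset.bot_eq_empty] at hZeq
        exact symmDiff_eq_bot.mp hZeq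
      subst hZX
      have : X ∆ {u, u} ∉ D := hcon u hu
      rw [show ({u, u} : Finset V) = {u} by simp] at this
      exact this hZ
    -- S := (X ∆ Y).erase u ∈ D'
    set S := (X ∆ Y).erase u with hSdef
    have hS : S ∈ D' := by
      refine ⟨Y, hY, ?_⟩
      ext x
      simp only [hSdef, hX'def, Finset.mem_symmDiff, Finset.mem_erase,
        Finset.mem_singleton]
      constructor
      · rintro (⟨hxY, hx⟩ | ⟨hx, hxY⟩)
        · push_neg at hx
          by_cases hxu : x = u
          · subst hxu; tauto
          · refine ⟨hxu, ?_⟩; tauto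
        · rcases hx with ⟨hxX, hxu⟩ | ⟨hxu, hxX⟩
          · refine ⟨?_, Or.inl ⟨hxX, hxY⟩⟩
            rintro rfl; tauto
          · subst hxu; tauto
      · rintro ⟨hxu, hxXY⟩
        rcases hxXY with ⟨hxX, hxY⟩ | ⟨hxY, hxX⟩
        · right; constructor
          · left; exact ⟨hxX, hxu⟩
          · exact hxY
        · left; refine ⟨hxY, ?_⟩
          rintro (⟨hxX', _⟩ | ⟨rfl, _⟩) <;> tauto
    -- no singleton {v} with v ∈ S is in D'
    have hsingle : ∀ v ∈ S, ({v} : Finset V) ∉ D' := by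
      intro v hvS ⟨Z, hZ, hZeq⟩
      have hvu : v ≠ u := (Finset.mem_erase.mp hvS).1
      have hvXY : v ∈ X ∆ Y := (Finset.mem_erase.mp hvS).2
      have hZX : Z = X ∆ {u, v} := by
        have hZ' : Z = ({v} : Finset V) ∆ X' := by
          have := congrArg (· ∆ X') hZeq
          simpa [symmDiff_symmDiff_cancel_right] using this
        rw [hZ']
        ext x
        simp only [hX'def, Finset.mem_symmDiff, Finset.mem_singleton,
          Finset.mem_insert]
        by_cases hxu : x = u <;> by_cases hxv : x = v <;> subst_vars <;> tauto
      exact hcon v hvXY (hZX ▸ hZ)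
    -- pick a minimum-cardinality member of D' contained in S
    set F : Set (Finset V) := {Z | Z ∈ D' ∧ Z ⊆ S} with hFdef
    have hSF : S ∈ F := ⟨hS, Finset.Subset.refl _⟩
    have hns : (Finset.card '' F).Nonempty := ⟨S.card, S, hSF, rfl⟩
    obtain ⟨T, hTF, hTcard⟩ := Nat.sInf_mem hns
    have hTmin : T ∈ minFam D' := by
      refine ⟨hTF.1, ?_⟩
      intro Z hZ hZT
      have hZF : Z ∈ F := ⟨hZ, hZT.trans hTF.2⟩
      have : sInf (Finset.card '' F) ≤ Z.card := Nat.sInf_le ⟨Z, hZF, rfl⟩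
      exact Finset.eq_of_subset_of_card_le hZT (by omega)
    have humin : ({u} : Finset V) ∈ minFam D' := by
      refine ⟨h1, ?_⟩
      intro Z hZ hZu
      rcases Finset.subset_singleton_iff.mp hZu with rfl | rfl
      · exact absurd hZ hempty
      · rfl
    have hcard1 : ({u} : Finset V).card = T.card := h X' _ humin _ hTmin
    rw [Finset.card_singleton] at hcard1
    obtain ⟨v, rfl⟩ := Finset.card_eq_one.mp hcard1.symm
    exact hsingle v (hTF.2 (Finset.mem_singleton_self v)) hTF.1
end

section
/- Let M = (V, D) be a proper set system. Then D is the set of bases of a matroid on ground set V if and only if both (1) D is equicardinal, and (2) for each X ⊆ V, the family of inclusion-minimal sets of M*X is equicardinal. -/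
open scoped symmDiff

variable {V : Type*} [DecidableEq V] [Fintype V]

private lemma card_symmDiff_aux (S X : Finset V) :
    (S ∆ X).card + (S ∩ X).card + (X ∩ S).card = S.card + X.card := by
  rw [symmDiff_def, Finset.sup_eq_union,
    Finset.card_union_of_disjoint (disjoint_sdiff_sdiff)]
  have := Finset.card_sdiff_add_card_inter S X
  have := Finset.card_sdiff_add_card_inter X S
  omega

/-- In any nonempty-below-`A` family, there is an inclusion-minimal member of
the whole family below `A` of minimum cardinality among members below `A`. -/
private lemma exists_minFam_subset (F : Set (Finset V)) (A : Finset V)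
    (h : ∃ Y ∈ F, Y ⊆ A) :
    ∃ S, S ∈ minFam F ∧ S ⊆ A ∧ ∀ T ∈ F, T ⊆ A → S.card ≤ T.card := by
  classical
  have hne : ((fun T : Finset V => T.card) '' {T ∈ F | T ⊆ A}).Nonempty := by
    obtain ⟨Y, hY, hYA⟩ := h
    exact ⟨Y.card, ⟨Y, ⟨hY, hYA⟩, rfl⟩⟩
  obtain ⟨S, ⟨hSF, hSA⟩, hScard⟩ := Nat.sInf_mem hne
  have hminc : ∀ T ∈ F, T ⊆ A → S.card ≤ T.card := by
    intro T hT hTA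
    exact hScard.trans_le (Nat.sInf_le ⟨T, ⟨hT, hTA⟩, rfl⟩)
  refine ⟨S, ⟨hSF, ?_⟩, hSA, hminc⟩
  intro T hT hTS
  exact Finset.eq_of_subset_of_card_le hTS (hminc T hT (hTS.trans hSA))

/-- The key exchange lemma for the converse direction. -/
private lemma exchange_of_conds {D : Set (Finset V)}
    (h1 : Equicardinal D) (h2 : ∀ X : Finset V, Equicardinal (minFam (pivotSS D X)))
    {A B : Finset V} (hA : A ∈ D) (hB : B ∈ D) {a : V} (haA : a ∈ A) (haB : a ∉ B) :
    ∃ b, b ∈ B ∧ b ∉ A ∧ insert b (A.erase a) ∈ D := by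
  classical
  have hcardAB : A.card = B.card := h1 A hA B hB
  set X : Finset V := (A ∪ B).erase a with hXdef
  have haX : a ∉ X := Finset.notMem_erase a _
  have hAX : A ∆ X = insert a (B \ A) := by
    ext x
    by_cases hxa : x = a
    · subst hxa; simp [Finset.mem_symmDiff, haA, haB, hXdef]
    · simp [Finset.mem_symmDiff, hxa, hXdef]; tauto
  have hBX : B ∆ X = (A \ B).erase a := by
    ext x
    by_cases hxa : x = a
    · subst hxa; simp [Finset.mem_symmDiff, haA, haB, hXdef]
    · simp [Finset.mem_symmDiff, hxa, hXdef]; tauto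
  have hAXmem : A ∆ X ∈ pivotSS D X := ⟨A, hA, rfl⟩
  have hBXmem : B ∆ X ∈ pivotSS D X := ⟨B, hB, rfl⟩
  -- minimal member below A ∆ X
  obtain ⟨S, hSmin, hSsub, -⟩ :=
    exists_minFam_subset (pivotSS D X) (insert a (B \ A)) ⟨A ∆ X, hAXmem, hAX.le⟩
  -- minimal member below B ∆ X
  obtain ⟨S', hS'min, -, hS'card⟩ :=
    exists_minFam_subset (pivotSS D X) ((A \ B).erase a) ⟨B ∆ X, hBXmem, hBX.le⟩
  have hSS' : S.card = S'.card := h2 X S hSmin S' hS'min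
  have hS'le : S'.card ≤ ((A \ B).erase a).card := by
    rw [← hBX]; exact hS'card (B ∆ X) hBXmem hBX.le
  obtain ⟨Y, hY, hYS⟩ := hSmin.1
  -- hYS : Y ∆ X = S, hence Y = S ∆ X
  have hYS' : Y ∆ X = S := hYS
  have hYeq : Y = S ∆ X := by
    rw [← hYS', symmDiff_symmDiff_cancel_right]
  have hYcard : Y.card = A.card := h1 Y hY A hA
  -- cardinality bookkeeping
  have e1 := card_symmDiff_aux S X
  have e2 : (X ∩ S).card = (S ∩ X).card := by rw [Finset.inter_comm]
  have e3 : (S ∆ X).card = A.card := by rw [← hYeq, hYcard]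
  have e4 : X.card + 1 = (A ∪ B).card :=
    Finset.card_erase_add_one (by simp [haA])
  have e5 : (A ∪ B).card + (A ∩ B).card = A.card + B.card :=
    Finset.card_union_add_card_inter A B
  have e6 : (B \ A).card + (B ∩ A).card = B.card :=
    Finset.card_sdiff_add_card_inter B A
  have e7 : (A \ B).card + (A ∩ B).card = A.card :=
    Finset.card_sdiff_add_card_inter A B
  have e8 : (B ∩ A).card = (A ∩ B).card := by rw [Finset.inter_comm]
  have e9 : ((A \ B).erase a).card + 1 = (A \ B).card :=
    Finset.card_erase_add_one (by simp [haA, haB])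
  have e10 : (S ∩ X).card ≤ S.card := Finset.card_le_card (Finset.inter_subset_left)
  have key : (S ∩ X).card = S.card ∧ S.card + 1 = (B \ A).card := by omega
  have hSX : S ⊆ X := by
    rw [← Finset.inter_eq_left]
    exact Finset.eq_of_subset_of_card_le Finset.inter_subset_left key.1.ge
  have haS : a ∉ S := fun h => haX (hSX h)
  have hSBA : S ⊆ B \ A := by
    intro x hx
    rcases Finset.mem_insert.mp (hSsub hx) with h | h
    · exact absurd (h ▸ hx) haS
    · exact h
  have hbne : ((B \ A) \ S).Nonempty := by
    rw [← Finset.card_pos, Finset.card_sdiff_of_subset hSBA]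
    omega
  obtain ⟨b, hb⟩ := hbne
  have hbBA : b ∈ B \ A := (Finset.mem_sdiff.mp hb).1
  have hbS : b ∉ S := (Finset.mem_sdiff.mp hb).2
  have hbB : b ∈ B := (Finset.mem_sdiff.mp hbBA).1
  have hbA : b ∉ A := (Finset.mem_sdiff.mp hbBA).2
  have hSeq : S = (B \ A).erase b := by
    apply Finset.eq_of_subset_of_card_le
    · intro x hx
      exact Finset.mem_erase.mpr ⟨fun h => hbS (h ▸ hx), hSBA hx⟩
    · rw [Finset.card_erase_of_mem hbBA]
      omega
  refine ⟨b, hbB, hbA, ?_⟩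
  have : insert b (A.erase a) = Y := by
    have hab : a ≠ b := fun h => hbA (h ▸ haA)
    rw [hYeq, hSeq]
    ext x
    by_cases hxa : x = a
    · subst hxa
      simp [Finset.mem_symmDiff, haA, haB, hbA, hXdef, hab]
    · by_cases hxb : x = b
      · subst hxb
        simp [Finset.mem_symmDiff, hbA, hbB, hXdef, hxa]
      · simp [Finset.mem_symmDiff, hxa, hxb, hXdef]
        tauto
  rw [this]
  exact hY

private lemma basis_of_minFam {D : Set (Finset V)} {M : Matroid V}
    (hE : M.E = Set.univ)
    (hBase : ∀ Bs : Set V, M.IsBase Bs ↔ ∃ Y ∈ D, (Y : Set V) = Bs)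
    {X Y : Finset V} (hY : Y ∈ D) (hmin : Y ∆ X ∈ minFam (pivotSS D X)) :
    M.IsBasis ↑(Y ∩ X) ↑X := by
  classical
  have hYb : M.IsBase ↑Y := (hBase ↑Y).mpr ⟨Y, hY, rfl⟩
  have hInd : M.Indep ↑(Y ∩ X) :=
    hYb.indep.subset (by exact_mod_cast Finset.coe_subset.mpr Finset.inter_subset_left)
  apply hInd.isBasis_of_forall_insert
    (by exact_mod_cast Finset.coe_subset.mpr Finset.inter_subset_right)
  intro e he
  rw [Matroid.dep_iff]
  refine ⟨fun hi => ?_, by rw [hE]; exact Set.subset_univ _⟩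
  have heX : e ∈ X := by exact_mod_cast he.1
  have heYX : e ∉ Y ∩ X := by
    intro h; exact he.2 (by exact_mod_cast h)
  have heY : e ∉ Y := fun h => heYX (Finset.mem_inter.mpr ⟨h, heX⟩)
  obtain ⟨B', hB', hIB', hB'sub⟩ := hi.exists_isBase_subset_union_isBase hYb
  obtain ⟨Y', hY', hYY'⟩ := (hBase B').mp hB'
  have hY'mem : ∀ x : V, x ∈ Y' → x = e ∨ x ∈ Y ∩ X ∨ x ∈ Y := by
    intro x hx
    have hx' : (x : V) ∈ B' := by rw [← hYY']; exact_mod_cast hx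
    have := hB'sub hx'
    simp [Set.mem_insert_iff, Set.mem_union, Finset.mem_coe] at this
    tauto
  have hYX'sub : ∀ x : V, x ∈ Y ∩ X → x ∈ Y' := by
    intro x hx
    have : (x : V) ∈ B' := hIB' (Set.mem_insert_of_mem _ (by exact_mod_cast hx))
    rw [← hYY'] at this
    exact_mod_cast this
  have hsub : Y' ∆ X ⊆ Y ∆ X := by
    intro x hx
    rw [Finset.mem_symmDiff] at hx ⊢
    rcases hx with ⟨hxY', hxX⟩ | ⟨hxX, hxY'⟩
    · left
      refine ⟨?_, hxX⟩
      rcases hY'mem x hxY' with h | h | h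
      · exact absurd (h ▸ heX) hxX
      · exact (Finset.mem_inter.mp h).1
      · exact h
    · right
      refine ⟨hxX, fun hxY => hxY' (hYX'sub x (Finset.mem_inter.mpr ⟨hxY, hxX⟩))⟩
  have heq : Y' ∆ X = Y ∆ X := hmin.2 (Y' ∆ X) ⟨Y', hY', rfl⟩ hsub
  have heY' : e ∈ Y' := by
    have : (e : V) ∈ B' := hIB' (Set.mem_insert _ _)
    rw [← hYY'] at this
    exact_mod_cast this
  have h1 : e ∈ Y ∆ X := Finset.mem_symmDiff.mpr (Or.inr ⟨heX, heY⟩)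
  rw [← heq, Finset.mem_symmDiff] at h1
  rcases h1 with ⟨-, h⟩ | ⟨-, h⟩
  · exact h heX
  · exact h heY'

private lemma card_of_base {M : Matroid V} {A B : Finset V}
    (hA : M.IsBase ↑A) (hB : M.IsBase ↑B) : A.card = B.card := by
  have := hA.encard_eq_encard_of_isBase hB
  rwa [Set.encard_coe_eq_coe_finsetCard, Set.encard_coe_eq_coe_finsetCard,
    Nat.cast_inj] at this

/-- `D` is the set of bases of a matroid on ground set `V` iff `D`
is equicardinal and for each `X` the inclusion-minimal sets of `M*X` are
equicardinal. -/
theorem matroid_bases_iff (D : Set (Finset V)) (hD : D.Nonempty) :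
    (∃ M : Matroid V, M.E = Set.univ ∧
        ∀ B : Set V, M.IsBase B ↔ ∃ Y ∈ D, (Y : Set V) = B) ↔
      (Equicardinal D ∧ ∀ X : Finset V, Equicardinal (minFam (pivotSS D X))) := by
  classical
  constructor
  · rintro ⟨M, hE, hBase⟩
    have hbase : ∀ Y ∈ D, M.IsBase ↑Y := fun Y hY => (hBase ↑Y).mpr ⟨Y, hY, rfl⟩
    refine ⟨fun A hA B hB => card_of_base (hbase A hA) (hbase B hB), ?_⟩
    intro X S₁ hS₁ S₂ hS₂
    obtain ⟨Y₁, hY₁, hY₁S⟩ := hS₁.1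
    obtain ⟨Y₂, hY₂, hY₂S⟩ := hS₂.1
    have hY₁S : Y₁ ∆ X = S₁ := hY₁S
    have hY₂S : Y₂ ∆ X = S₂ := hY₂S
    have hb₁ : M.IsBasis ↑(Y₁ ∩ X) ↑X := basis_of_minFam hE hBase hY₁ (hY₁S ▸ hS₁)
    have hb₂ : M.IsBasis ↑(Y₂ ∩ X) ↑X := basis_of_minFam hE hBase hY₂ (hY₂S ▸ hS₂)
    have hci : (Y₁ ∩ X).card = (Y₂ ∩ X).card := by
      have := hb₁.encard_eq_encard hb₂
      rwa [Set.encard_coe_eq_coe_finsetCard, Set.encard_coe_eq_coe_finsetCard,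
        Nat.cast_inj] at this
    have hcY : Y₁.card = Y₂.card := card_of_base (hbase Y₁ hY₁) (hbase Y₂ hY₂)
    have c1 := card_symmDiff_aux Y₁ X
    have c2 := card_symmDiff_aux Y₂ X
    have i1 : (X ∩ Y₁).card = (Y₁ ∩ X).card := by rw [Finset.inter_comm]
    have i2 : (X ∩ Y₂).card = (Y₂ ∩ X).card := by rw [Finset.inter_comm]
    rw [hY₁S] at c1
    rw [hY₂S] at c2
    omega
  · rintro ⟨h1, h2⟩
    have hexch : Matroid.ExchangeProperty (fun Bs : Set V => ∃ Y ∈ D, (Y : Set V) = Bs) := by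
      rintro _ _ ⟨A, hA, rfl⟩ ⟨B, hB, rfl⟩ a ha
      have haA : a ∈ A := by exact_mod_cast ha.1
      have haB : a ∉ B := by
        intro h; exact ha.2 (by exact_mod_cast h)
      obtain ⟨b, hbB, hbA, hmem⟩ := exchange_of_conds h1 h2 hA hB haA haB
      refine ⟨b, ⟨by exact_mod_cast hbB, fun h => hbA (by exact_mod_cast h)⟩,
        insert b (A.erase a), hmem, ?_⟩
      simp [Finset.coe_insert, Finset.coe_erase]
    obtain ⟨A0, hA0⟩ := hD
    refine ⟨Matroid.ofIsBaseOfFinite Set.finite_univ _ ⟨↑A0, A0, hA0, rfl⟩ hexch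
      (fun B _ => Set.subset_univ B), rfl, fun B => ?_⟩
    rw [Matroid.ofIsBaseOfFinite_isBase]
end

section
/- Let M = (V, D) be a delta-matroid and X ⊆ V such that M[X] is proper. Then d_{M[X]}(Y) = d_M(Y) for all Y ⊆ X. In particular, d_M(X) = min{|X \ Y| : Y ∈ D, Y ⊆ X} whenever some set of D is contained in X. -/
open scoped symmDiff

variable {V : Type*} [DecidableEq V] [Fintype V]

lemma card_symmDiff_pair_le (A : Finset V) (u v : V) (hu : u ∈ A) :
    (A ∆ ({u, v} : Finset V)).card ≤ A.card := by
  have hsub : A ∆ ({u, v} : Finset V) ⊆ insert v (A.erase u) := by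
    intro x hx
    rw [Finset.mem_symmDiff] at hx
    simp only [Finset.mem_insert, Finset.mem_erase] at *
    rcases hx with ⟨hxA, hx2⟩ | ⟨hx2, hxA⟩
    · right; exact ⟨fun h => hx2 (by simp [h]), hxA⟩
    · rcases hx2 with h | h
      · exact absurd (h ▸ hu) hxA
      · left; exact Finset.mem_singleton.mp h
  calc (A ∆ ({u, v} : Finset V)).card ≤ (insert v (A.erase u)).card :=
        Finset.card_le_card hsub
    _ ≤ (A.erase u).card + 1 := Finset.card_insert_le _ _
    _ = A.card - 1 + 1 := by rw [Finset.card_erase_of_mem hu]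
    _ = A.card := Nat.succ_pred_eq_of_pos (Finset.card_pos.mpr ⟨u, hu⟩)

lemma exists_min_subset (D : Set (Finset V)) (hDM : DeltaMatroid D)
    (X : Finset V) (hX : (restrictSS D X).Nonempty) (Y : Finset V) (hY : Y ⊆ X) :
    ∃ Z ∈ D, Z ⊆ X ∧ (Y ∆ Z).card = dSS D Y := by
  obtain ⟨W, hWD, hWX⟩ := hX
  set S : Set (Finset V) := {Z ∈ D | (Y ∆ Z).card = dSS D Y} with hS
  have hSne : S.Nonempty := by
    have hne : ((fun Z => (Y ∆ Z).card) '' D).Nonempty := hDM.1.image _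
    obtain ⟨Z, hZD, hZv⟩ := Nat.sInf_mem hne
    exact ⟨Z, hZD, hZv⟩
  have hTne : ((fun Z => (Z \ X).card) '' S).Nonempty := hSne.image _
  obtain ⟨Z, hZS, hZn⟩ := Nat.sInf_mem hTne
  refine ⟨Z, hZS.1, ?_, hZS.2⟩
  by_contra hZX
  obtain ⟨u, huZ, huX⟩ := Finset.not_subset.mp hZX
  have huZW : u ∈ Z ∆ W := Finset.mem_symmDiff.mpr (Or.inl ⟨huZ, fun h => huX (hWX h)⟩)
  obtain ⟨v, hvZW, hZ'D⟩ := hDM.2 Z hZS.1 W hWD u huZW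
  set Z' := Z ∆ ({u, v} : Finset V) with hZ'
  -- Y ∆ Z' = (Y ∆ Z) ∆ {u,v}
  have hYZ' : Y ∆ Z' = (Y ∆ Z) ∆ ({u, v} : Finset V) := (symmDiff_assoc Y Z _).symm
  have huYZ : u ∈ Y ∆ Z := Finset.mem_symmDiff.mpr (Or.inr ⟨huZ, fun h => huX (hY h)⟩)
  have hle : (Y ∆ Z').card ≤ dSS D Y := by
    rw [hYZ', ← hZS.2]
    exact card_symmDiff_pair_le _ _ _ huYZ
  have hge : dSS D Y ≤ (Y ∆ Z').card := Nat.sInf_le ⟨Z', hZ'D, rfl⟩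
  have hZ'S : Z' ∈ S := ⟨hZ'D, le_antisymm hle hge⟩
  -- Z' \ X ⊆ (Z \ X).erase u
  have hvXZ : v ∈ X ∨ v ∈ Z := by
    rcases Finset.mem_symmDiff.mp hvZW with ⟨h, _⟩ | ⟨h, _⟩
    · exact Or.inr h
    · exact Or.inl (hWX h)
  have hsub : Z' \ X ⊆ (Z \ X).erase u := by
    intro x hx
    rw [Finset.mem_sdiff] at hx
    obtain ⟨hxZ', hxX⟩ := hx
    rcases Finset.mem_symmDiff.mp hxZ' with ⟨hxZ, hx2⟩ | ⟨hx2, hxZ⟩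
    · refine Finset.mem_erase.mpr ⟨fun h => hx2 (by simp [h]), Finset.mem_sdiff.mpr ⟨hxZ, hxX⟩⟩
    · rcases Finset.mem_insert.mp hx2 with h | h
      · exact absurd (h ▸ huZ) hxZ
      · have hxv : x = v := Finset.mem_singleton.mp h
        rcases hvXZ with hv | hv
        · exact absurd (hxv ▸ hv) hxX
        · exact absurd (hxv ▸ hv) hxZ
  have hlt : (Z' \ X).card < (Z \ X).card := by
    have huZX : u ∈ Z \ X := Finset.mem_sdiff.mpr ⟨huZ, huX⟩
    calc (Z' \ X).card ≤ ((Z \ X).erase u).card := Finset.card_le_card hsub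
      _ < (Z \ X).card := Finset.card_erase_lt_of_mem huZX
  have : sInf ((fun Z => (Z \ X).card) '' S) ≤ (Z' \ X).card :=
    Nat.sInf_le ⟨Z', hZ'S, rfl⟩
  have hZn2 : (Z \ X).card = sInf ((fun Z => (Z \ X).card) '' S) := hZn
  omega

/-- for a delta-matroid `M` and `X` with `M[X]` proper,
`d_{M[X]}(Y) = d_M(Y)` for all `Y ⊆ X`; in particular
`d_M(X) = min{|X \ Y| : Y ∈ D, Y ⊆ X}`. -/
theorem dist_restrict_deltaMatroid (D : Set (Finset V)) (hDM : DeltaMatroid D)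
    (X : Finset V) (hX : (restrictSS D X).Nonempty) :
    (∀ Y : Finset V, Y ⊆ X → dSS (restrictSS D X) Y = dSS D Y) ∧
    dSS D X = sInf ((fun Y => (X \ Y).card) '' restrictSS D X) := by
  have key : ∀ Y : Finset V, Y ⊆ X → dSS (restrictSS D X) Y = dSS D Y := by
    intro Y hY
    apply le_antisymm
    · obtain ⟨Z, hZD, hZX, hZv⟩ := exists_min_subset D hDM X hX Y hY
      rw [← hZv]
      exact Nat.sInf_le ⟨Z, ⟨hZD, hZX⟩, rfl⟩
    · have hne : ((fun Z => (Y ∆ Z).card) '' restrictSS D X).Nonempty := hX.image _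
      obtain ⟨Z, hZ, hZv⟩ := Nat.sInf_mem hne
      rw [show dSS (restrictSS D X) Y = (Y ∆ Z).card from hZv.symm]
      exact Nat.sInf_le ⟨Z, hZ.1, rfl⟩
  refine ⟨key, ?_⟩
  rw [← key X subset_rfl, dSS]
  congr 1
  apply Set.image_congr
  intro Z hZ
  have : Z ∆ X = X \ Z := symmDiff_of_le hZ.2
  rw [symmDiff_comm, this]
end

section
/- Let M = (V, D) be a delta-matroid and v ∈ V. If d_M ≠ d_{M*v}, then the family of inclusion-minimal sets of M∂v is equicardinal. -/
set_option linter.unusedSectionVars false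

open scoped symmDiff

variable {V : Type*} [DecidableEq V] [Fintype V]

/-! ### Auxiliary lemmas -/

private lemma finset_symmDiff_single_mem {Z : Finset V} {v : V} (h : v ∈ Z) :
    Z ∆ {v} = Z.erase v := by
  ext x
  by_cases hx : x = v <;>
    simp [Finset.mem_symmDiff, Finset.mem_erase, hx, h]

private lemma finset_symmDiff_single_notMem {Z : Finset V} {v : V} (h : v ∉ Z) :
    Z ∆ {v} = insert v Z := by
  ext x
  by_cases hx : x = v <;>
    simp [Finset.mem_symmDiff, Finset.mem_insert, hx, h]

private lemma symmDiff_pair_subset_erase {A : Finset V} {u w : V}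
    (hu : u ∈ A) (hw : w ∈ A) : A ∆ {u, w} ⊆ A.erase u := by
  intro x hx
  rw [Finset.mem_symmDiff] at hx
  rcases hx with ⟨hxA, hxp⟩ | ⟨hxp, hxA⟩
  · exact Finset.mem_erase.mpr ⟨fun h => hxp (by simp [h]), hxA⟩
  · rcases Finset.mem_insert.mp hxp with rfl | hxw
    · exact absurd hu hxA
    · exact absurd ((Finset.mem_singleton.mp hxw) ▸ hw) hxA

private lemma mem_pivotSS {D : Set (Finset V)} {A X : Finset V} :
    X ∈ pivotSS D A ↔ X ∆ A ∈ D := by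
  constructor
  · rintro ⟨Y, hY, rfl⟩
    rwa [symmDiff_symmDiff_cancel_right]
  · intro hX
    exact ⟨X ∆ A, hX, symmDiff_symmDiff_cancel_right A X⟩

private lemma dSS_empty_le {D : Set (Finset V)} {Y : Finset V} (hY : Y ∈ D) :
    dSS D ∅ ≤ Y.card := by
  exact Nat.sInf_le ⟨Y, hY, congrArg Finset.card (bot_symmDiff Y)⟩

private lemma exists_dSS_empty {D : Set (Finset V)} (hne : D.Nonempty) :
    ∃ Y ∈ D, Y.card = dSS D ∅ := by
  have h := Nat.sInf_mem (hne.image (fun Y => ((∅ : Finset V) ∆ Y).card))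
  obtain ⟨Y, hY, hc⟩ := h
  exact ⟨Y, hY, (congrArg Finset.card (bot_symmDiff Y)).symm.trans hc⟩

private lemma pivot_deltaMatroid (D : Set (Finset V)) (hDM : DeltaMatroid D)
    (A : Finset V) : DeltaMatroid (pivotSS D A) := by
  obtain ⟨⟨Y0, hY0⟩, hex⟩ := hDM
  refine ⟨⟨Y0 ∆ A, ⟨Y0, hY0, rfl⟩⟩, ?_⟩
  rintro X ⟨X', hX', rfl⟩ Y ⟨Y', hY', rfl⟩ u hu
  have hXY : (X' ∆ A) ∆ (Y' ∆ A) = X' ∆ Y' := by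
    ext x; simp only [Finset.mem_symmDiff]; tauto
  rw [hXY] at hu
  obtain ⟨w, hw, hXw⟩ := hex X' hX' Y' hY' u hu
  refine ⟨w, by rwa [hXY], ?_⟩
  have heq : (X' ∆ A) ∆ {u, w} = (X' ∆ {u, w}) ∆ A := by
    ext x; simp only [Finset.mem_symmDiff]; tauto
  rw [heq]
  exact ⟨X' ∆ {u, w}, hXw, rfl⟩

private lemma exists_minFam_subset_s10 (D : Set (Finset V)) :
    ∀ {X : Finset V}, X ∈ D → ∃ Z ∈ minFam D, Z ⊆ X := by
  intro X
  induction X using Finset.strongInductionOn with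
  | _ X ih =>
    intro hX
    by_cases hmin : ∀ Y ∈ D, Y ⊆ X → Y = X
    · exact ⟨X, ⟨hX, hmin⟩, subset_rfl⟩
    · push_neg at hmin
      obtain ⟨Y, hY, hYX, hne⟩ := hmin
      obtain ⟨Z, hZ, hZY⟩ := ih Y (lt_of_le_of_ne hYX hne) hY
      exact ⟨Z, hZ, hZY.trans hYX⟩

private lemma minFam_card (D : Set (Finset V)) (hDM : DeltaMatroid D) {X : Finset V}
    (hX : X ∈ minFam D) : X.card = dSS D ∅ := by
  obtain ⟨hXD, hXmin⟩ := hX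
  obtain ⟨Y0, hY0, hY0c⟩ := exists_dSS_empty hDM.1
  suffices H : ∀ n : ℕ, ∀ Y ∈ D, Y.card = dSS D ∅ → (X ∆ Y).card ≤ n →
      X.card = dSS D ∅ from H (X ∆ Y0).card Y0 hY0 hY0c le_rfl
  intro n
  induction n with
  | zero =>
    intro Y hY hYc hc
    have h0 : X ∆ Y = ⊥ := by
      rw [Finset.bot_eq_empty]
      exact Finset.card_eq_zero.mp (Nat.le_antisymm hc (Nat.zero_le _))
    rw [symmDiff_eq_bot.mp h0]
    exact hYc
  | succ n ih =>
    intro Y hY hYc hc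
    by_cases hYX : Y ⊆ X
    · rw [← hXmin Y hY hYX]; exact hYc
    · obtain ⟨u, huY, huX⟩ := Finset.not_subset.mp hYX
      have hu : u ∈ Y ∆ X := Finset.mem_symmDiff.mpr (Or.inl ⟨huY, huX⟩)
      obtain ⟨w, hw, hYw⟩ := hDM.2 Y hY X hXD u hu
      have hdle : dSS D ∅ ≤ (Y ∆ {u, w}).card := dSS_empty_le hYw
      rw [Finset.mem_symmDiff] at hw
      rcases hw with ⟨hwY, hwX⟩ | ⟨hwX, hwY⟩
      · -- w ∈ Y : contradiction with minimality of cardinality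
        exfalso
        have h1 : (Y ∆ {u, w}).card ≤ (Y.erase u).card :=
          Finset.card_le_card (symmDiff_pair_subset_erase huY hwY)
        rw [Finset.card_erase_of_mem huY] at h1
        have h2 : 0 < Y.card := Finset.card_pos.mpr ⟨u, huY⟩
        omega
      · -- w ∈ X \ Y : make progress
        have hYins : Y ∆ {u, w} = insert w (Y.erase u) := by
          have huw : u ≠ w := fun h => hwY (h ▸ huY)
          ext x
          by_cases hx1 : x = u <;> by_cases hx2 : x = w <;>
            simp [Finset.mem_symmDiff, Finset.mem_insert, Finset.mem_erase,
              hx1, hx2, huY, hwY, huw]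
        have hYc' : (Y ∆ {u, w}).card = Y.card := by
          rw [hYins, Finset.card_insert_of_notMem
            (fun hmem => hwY (Finset.mem_of_mem_erase hmem)),
            Finset.card_erase_of_mem huY]
          have h2 : 0 < Y.card := Finset.card_pos.mpr ⟨u, huY⟩
          omega
        have hassoc : X ∆ (Y ∆ {u, w}) = (X ∆ Y) ∆ {u, w} := by
          ext x; simp only [Finset.mem_symmDiff]; tauto
        have hsub : X ∆ (Y ∆ {u, w}) ⊆ (X ∆ Y).erase u := by
          rw [hassoc]
          exact symmDiff_pair_subset_erase
            (Finset.mem_symmDiff.mpr (Or.inr ⟨huY, huX⟩))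
            (Finset.mem_symmDiff.mpr (Or.inl ⟨hwX, hwY⟩))
        have hcard : (X ∆ (Y ∆ {u, w})).card ≤ n := by
          have h1 : (X ∆ (Y ∆ {u, w})).card ≤ ((X ∆ Y).erase u).card :=
            Finset.card_le_card hsub
          rw [Finset.card_erase_of_mem
            (Finset.mem_symmDiff.mpr (Or.inr ⟨huY, huX⟩))] at h1
          omega
        exact ih (Y ∆ {u, w}) hYw (by rw [hYc', hYc]) hcard

private lemma key_lemma (E F : Set (Finset V)) (hE : DeltaMatroid E)
    (h1 : ∀ Z ∈ minFam E, Z ∈ F) (h2 : ∀ X ∈ F, ∃ Z ∈ minFam E, Z ⊆ X) :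
    Equicardinal (minFam F) := by
  have main : ∀ X ∈ minFam F, X.card = dSS E ∅ := by
    rintro X ⟨hXF, hXmin⟩
    obtain ⟨Z, hZ, hZX⟩ := h2 X hXF
    have hZeq : Z = X := hXmin Z (h1 Z hZ) hZX
    exact hZeq ▸ minFam_card E hE hZ
  intro X hX Y hY
  rw [main X hX, main Y hY]

private lemma mem_dp_img {D : Set (Finset V)} {v : V} {X : Finset V} :
    X ∈ (fun Z => Z \ {v}) '' {Z ∈ D | v ∈ Z} ↔ v ∉ X ∧ insert v X ∈ D := by
  constructor
  · rintro ⟨Z, ⟨hZ, hvZ⟩, rfl⟩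
    have h1 : v ∉ Z \ {v} := by simp
    have h2 : insert v (Z \ {v}) = Z := by
      rw [← Finset.erase_eq, Finset.insert_erase hvZ]
    refine ⟨h1, ?_⟩
    show insert v (Z \ {v}) ∈ D
    rw [h2]; exact hZ
  · rintro ⟨hvX, hins⟩
    refine ⟨insert v X, ⟨hins, Finset.mem_insert_self _ _⟩, ?_⟩
    show insert v X \ {v} = X
    rw [← Finset.erase_eq, Finset.erase_insert hvX]

private lemma mem_dpSS {D : Set (Finset V)} {v : V} {X : Finset V} :
    X ∈ dpSS D v ↔ (X ∈ D ∧ ¬(v ∉ X ∧ insert v X ∈ D)) ∨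
      ((v ∉ X ∧ insert v X ∈ D) ∧ X ∉ D) := by
  unfold dpSS
  rw [Set.mem_symmDiff, mem_dp_img]

/-- for a delta-matroid `M` and `v` with `d_M ≠ d_{M*v}`, the
inclusion-minimal sets of `M∂v` are equicardinal. -/
theorem min_dual_pivot_equicardinal (D : Set (Finset V)) (hDM : DeltaMatroid D)
    (v : V) (h : dSS D ∅ ≠ dSS (pivotSS D {v}) ∅) :
    Equicardinal (minFam (dpSS D v)) := by
  rcases h.lt_or_gt with hlt | hgt
  · -- Case B : d < d*, use E = D
    have hminD : ∀ Z ∈ minFam D, v ∉ Z ∧ Z ∈ dpSS D v := by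
      intro Z hZ
      have hZD := hZ.1
      have hZc : Z.card = dSS D ∅ := minFam_card D hDM hZ
      have hvZ : v ∉ Z := by
        intro hvZ
        have h1 : dSS (pivotSS D {v}) ∅ ≤ (Z ∆ {v}).card :=
          dSS_empty_le ⟨Z, hZD, rfl⟩
        rw [finset_symmDiff_single_mem hvZ, Finset.card_erase_of_mem hvZ] at h1
        have h2 : 0 < Z.card := Finset.card_pos.mpr ⟨v, hvZ⟩
        omega
      refine ⟨hvZ, mem_dpSS.mpr (Or.inl ⟨hZD, ?_⟩)⟩
      rintro ⟨-, hins⟩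
      have hmemp : Z ∈ pivotSS D {v} :=
        mem_pivotSS.mpr (by rwa [finset_symmDiff_single_notMem hvZ])
      have h1 := dSS_empty_le hmemp
      omega
    have hcontain : ∀ X ∈ dpSS D v, ∃ Z ∈ minFam D, Z ⊆ X := by
      intro X hX
      rcases mem_dpSS.mp hX with ⟨hXD, -⟩ | ⟨⟨hvX, hins⟩, -⟩
      · exact exists_minFam_subset_s10 D hXD
      · obtain ⟨Z, hZ, hZX⟩ := exists_minFam_subset_s10 D hins
        refine ⟨Z, hZ, fun x hx => ?_⟩
        rcases Finset.mem_insert.mp (hZX hx) with rfl | hxX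
        · exact absurd hx (hminD Z hZ).1
        · exact hxX
    exact key_lemma D (dpSS D v) hDM (fun Z hZ => (hminD Z hZ).2) hcontain
  · -- Case A : d* < d, use E = pivotSS D {v}
    have hE : DeltaMatroid (pivotSS D {v}) := pivot_deltaMatroid D hDM {v}
    have hminE : ∀ Z ∈ minFam (pivotSS D {v}), v ∉ Z ∧ Z ∈ dpSS D v := by
      intro Z hZ
      have hZE : Z ∈ pivotSS D {v} := hZ.1
      have hZc : Z.card = dSS (pivotSS D {v}) ∅ := minFam_card _ hE hZ
      have hZD' : Z ∆ {v} ∈ D := mem_pivotSS.mp hZE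
      have hvZ : v ∉ Z := by
        intro hvZ
        have h1 : dSS D ∅ ≤ (Z ∆ {v}).card := dSS_empty_le hZD'
        rw [finset_symmDiff_single_mem hvZ, Finset.card_erase_of_mem hvZ] at h1
        have h2 : 0 < Z.card := Finset.card_pos.mpr ⟨v, hvZ⟩
        omega
      have hins : insert v Z ∈ D := by
        rwa [finset_symmDiff_single_notMem hvZ] at hZD'
      have hZnD : Z ∉ D := fun hZD => by
        have := dSS_empty_le hZD; omega
      exact ⟨hvZ, mem_dpSS.mpr (Or.inr ⟨⟨hvZ, hins⟩, hZnD⟩)⟩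
    have hcontain : ∀ X ∈ dpSS D v, ∃ Z ∈ minFam (pivotSS D {v}), Z ⊆ X := by
      intro X hX
      rcases mem_dpSS.mp hX with ⟨hXD, -⟩ | ⟨⟨hvX, hins⟩, -⟩
      · have hXE : X ∆ {v} ∈ pivotSS D {v} :=
          mem_pivotSS.mpr (by rwa [symmDiff_symmDiff_cancel_right])
        obtain ⟨Z, hZ, hZX⟩ := exists_minFam_subset_s10 _ hXE
        refine ⟨Z, hZ, fun x hx => ?_⟩
        have hxX := hZX hx
        rw [Finset.mem_symmDiff] at hxX
        rcases hxX with ⟨h1, -⟩ | ⟨h1, -⟩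
        · exact h1
        · exact absurd ((Finset.mem_singleton.mp h1) ▸ hx) (hminE Z hZ).1
      · have hXE : X ∈ pivotSS D {v} := by
          refine mem_pivotSS.mpr ?_
          rwa [finset_symmDiff_single_notMem hvX]
        exact exists_minFam_subset_s10 _ hXE
    exact key_lemma _ _ hE (fun Z hZ => (hminE Z hZ).2) hcontain
end

section
/- Let M = (V, D) be a delta-matroid and v ∈ V. Consider the three equicardinal families max(M), max(M*v), and max_card(M+v). Precisely two of these three families are equal, say both equal to M1, and the third family M2 satisfies: every set of M2 has cardinality exactly one smaller than every set of M1, and the pseudo-deletion of M2 on v equals M1, i.e., (V, {Y ∪ {v} : Y ∈ M2, v ∉ Y}) = M1. -/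
open scoped symmDiff

variable {V : Type*} [DecidableEq V] [Fintype V]

set_option linter.unusedSectionVars false

-- helper lemmas

lemma us (s : Finset V) (v : V) : s ∪ {v} = insert v s := by
  rw [Finset.insert_eq, Finset.union_comm]

lemma sd_of_mem {X : Finset V} {v : V} (h : v ∈ X) : X ∆ ({v} : Finset V) = X.erase v := by
  ext a
  simp only [Finset.mem_symmDiff, Finset.mem_singleton, Finset.mem_erase]
  constructor
  · rintro (⟨h1, h2⟩ | ⟨rfl, h2⟩)
    · exact ⟨h2, h1⟩
    · exact absurd h h2
  · rintro ⟨h1, h2⟩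
    exact Or.inl ⟨h2, h1⟩

lemma sd_of_not_mem {X : Finset V} {v : V} (h : v ∉ X) : X ∆ ({v} : Finset V) = insert v X := by
  ext a
  simp only [Finset.mem_symmDiff, Finset.mem_singleton, Finset.mem_insert]
  constructor
  · rintro (⟨h1, h2⟩ | ⟨rfl, h2⟩)
    · exact Or.inr h1
    · exact Or.inl rfl
  · rintro (rfl | h1)
    · exact Or.inr ⟨rfl, h⟩
    · exact Or.inl ⟨h1, fun he => h (he ▸ h1)⟩

lemma mem_pivot {D : Set (Finset V)} {v : V} {W : Finset V} :
    W ∈ pivotSS D {v} ↔ W ∆ {v} ∈ D := by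
  constructor
  · rintro ⟨Y, hY, rfl⟩
    rwa [symmDiff_symmDiff_cancel_right]
  · intro h
    exact ⟨W ∆ {v}, h, symmDiff_symmDiff_cancel_right _ _⟩

lemma pivot_DM {D : Set (Finset V)} (hDM : DeltaMatroid D) (v : V) :
    DeltaMatroid (pivotSS D {v}) := by
  have key : ∀ A B : Finset V, (A ∆ {v}) ∆ (B ∆ {v}) = A ∆ B := by
    intro A B
    rw [symmDiff_assoc, symmDiff_comm B, symmDiff_symmDiff_cancel_left]
  have key2 : ∀ A s t : Finset V, (A ∆ s) ∆ t = (A ∆ t) ∆ s := by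
    intro A s t
    rw [symmDiff_assoc, symmDiff_comm s, ← symmDiff_assoc]
  constructor
  · obtain ⟨X, hX⟩ := hDM.1
    exact ⟨X ∆ {v}, X, hX, rfl⟩
  · intro A hA B hB u hu
    have hA' := mem_pivot.mp hA
    have hB' := mem_pivot.mp hB
    obtain ⟨w, hw, hww⟩ := hDM.2 _ hA' _ hB' u (by rwa [key])
    refine ⟨w, by rwa [key] at hw, ?_⟩
    rw [mem_pivot, key2]
    exact hww

lemma mem_lc {D : Set (Finset V)} {v : V} {W : Finset V} :
    W ∈ lcSS D v ↔
      ((W ∈ D ∧ ¬(v ∈ W ∧ W.erase v ∈ D)) ∨ (W ∉ D ∧ (v ∈ W ∧ W.erase v ∈ D))) := by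
  have himg : W ∈ ((fun Z => Z ∪ {v}) '' {Z ∈ D | v ∉ Z}) ↔ (v ∈ W ∧ W.erase v ∈ D) := by
    constructor
    · rintro ⟨Z, ⟨hZ, hvZ⟩, rfl⟩
      show v ∈ Z ∪ {v} ∧ (Z ∪ {v}).erase v ∈ D
      rw [us]
      exact ⟨Finset.mem_insert_self _ _, by rwa [Finset.erase_insert hvZ]⟩
    · rintro ⟨h1, h2⟩
      exact ⟨W.erase v, ⟨h2, Finset.notMem_erase _ _⟩, by show W.erase v ∪ {v} = W; rw [us, Finset.insert_erase h1]⟩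
  rw [lcSS, Set.mem_symmDiff]
  tauto

lemma exists_maximal_mem {D : Set (Finset V)} {X : Finset V} (hX : X ∈ D) :
    ∃ W ∈ maxFam D, X ⊆ W := by
  obtain ⟨W, hW, hmax⟩ := Set.Finite.exists_maximalFor id {Y ∈ D | X ⊆ Y} (Set.toFinite _)
      ⟨X, hX, Finset.Subset.refl X⟩
  obtain ⟨hWD, hXW⟩ := hW
  refine ⟨W, ⟨hWD, fun Y hY hWY => ?_⟩, hXW⟩
  exact Finset.Subset.antisymm (hmax ⟨hY, hXW.trans hWY⟩ (Finset.le_iff_subset.mpr hWY)) hWY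

lemma card_le_of_maxFam {D : Set (Finset V)} (hDM : DeltaMatroid D) {X : Finset V}
    (hX : X ∈ maxFam D) : ∀ Y ∈ D, Y.card ≤ X.card := by
  obtain ⟨hXD, hXmax⟩ := hX
  suffices h : ∀ n, ∀ Y ∈ D, (X ∆ Y).card = n → Y.card ≤ X.card by
    intro Y hY
    exact h _ Y hY rfl
  intro n
  induction n using Nat.strong_induction_on with
  | _ n ih =>
    intro Y hY hn
    by_cases hsub : X ⊆ Y
    · rw [hXmax Y hY hsub]
    · obtain ⟨u, huX, huY⟩ := Finset.not_subset.mp hsub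
      have huSD : u ∈ Y ∆ X := Finset.mem_symmDiff.mpr (Or.inr ⟨huX, huY⟩)
      obtain ⟨w, hwSD, hY'⟩ := hDM.2 Y hY X hXD u huSD
      have hwXY : w ∈ X ∆ Y := by rwa [symmDiff_comm] at hwSD
      have huXY : u ∈ X ∆ Y := by rwa [symmDiff_comm] at huSD
      have hss : ({u, w} : Finset V) ⊆ X ∆ Y := by
        intro a ha
        rcases Finset.mem_insert.mp ha with rfl | ha
        · exact huXY
        · exact (Finset.mem_singleton.mp ha) ▸ hwXY
      have hsd : X ∆ (Y ∆ {u, w}) = (X ∆ Y) \ {u, w} := by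
        rw [← symmDiff_assoc, symmDiff_def, Finset.sdiff_eq_empty_iff_subset.mpr hss]
        simp
      have hlt : (X ∆ (Y ∆ {u, w})).card < n := by
        rw [hsd, ← hn]
        apply Finset.card_lt_card
        refine (Finset.ssubset_iff_of_subset (Finset.sdiff_subset)).mpr ⟨u, huXY, by simp⟩
      have hcard : Y.card ≤ (Y ∆ {u, w}).card := by
        rcases Finset.mem_symmDiff.mp hwSD with ⟨hwY, hwX⟩ | ⟨hwX, hwY⟩
        · -- w ∈ Y, w ∉ X
          have huw : u ≠ w := fun h => hwX (h ▸ huX)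
          have heq : Y ∆ {u, w} = insert u (Y.erase w) := by
            ext a
            simp only [Finset.mem_symmDiff, Finset.mem_insert, Finset.mem_singleton,
              Finset.mem_erase]
            by_cases hau : a = u
            · subst hau; simp [huY]
            · by_cases haw : a = w
              · subst haw; simp [hwY, huw, hau]
              · simp [hau, haw]
          have h1 : u ∉ Y.erase w := fun hc => huY (Finset.mem_of_mem_erase hc)
          have h2 : 1 ≤ Y.card := Finset.card_pos.mpr ⟨w, hwY⟩
          rw [heq, Finset.card_insert_of_notMem h1, Finset.card_erase_of_mem hwY]
          omega
        · -- w ∈ X, w ∉ Y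
          apply Finset.card_le_card
          intro a ha
          apply Finset.mem_symmDiff.mpr
          refine Or.inl ⟨ha, ?_⟩
          simp only [Finset.mem_insert, Finset.mem_singleton]
          rintro (rfl | rfl)
          · exact huY ha
          · exact hwY ha
      calc Y.card ≤ (Y ∆ {u, w}).card := hcard
        _ ≤ X.card := ih _ hlt _ hY' rfl

lemma maxFam_eq_maxCardFam {D : Set (Finset V)} (hDM : DeltaMatroid D) :
    maxFam D = maxCardFam D := by
  ext X
  constructor
  · intro hX
    exact ⟨hX.1, card_le_of_maxFam hDM hX⟩
  · intro hX
    exact ⟨hX.1, fun Y hY hXY => (Finset.eq_of_subset_of_card_le hXY (hX.2 Y hY)).symm⟩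

/-- among the three equicardinal families `max(M)`, `max(M*v)`,
`max_card(M+v)` of a delta-matroid `M`, precisely two are equal (to `M1`); the
third (`M2`) consists of sets of cardinality one smaller, and its
pseudo-deletion on `v` equals `M1`. -/
theorem max_mi_mi_minus_one (D : Set (Finset V)) (hDM : DeltaMatroid D) (v : V) :
    ∃ M1 M2 : Set (Finset V),
      ((maxFam D = M1 ∧ maxFam (pivotSS D {v}) = M1 ∧ maxCardFam (lcSS D v) = M2) ∨
       (maxFam D = M1 ∧ maxCardFam (lcSS D v) = M1 ∧ maxFam (pivotSS D {v}) = M2) ∨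
       (maxFam (pivotSS D {v}) = M1 ∧ maxCardFam (lcSS D v) = M1 ∧ maxFam D = M2)) ∧
      M1 ≠ M2 ∧
      Equicardinal M1 ∧ Equicardinal M2 ∧
      (∀ Y ∈ M2, ∀ Z ∈ M1, Y.card + 1 = Z.card) ∧
      ((fun Y => Y ∪ {v}) '' {Y ∈ M2 | v ∉ Y}) = M1 := by
  classical
  obtain ⟨X₁, hX₁⟩ := hDM.1
  obtain ⟨X₀, hX₀, -⟩ := exists_maximal_mem hX₁
  set r := X₀.card with hr
  have hX₀D : X₀ ∈ D := hX₀.1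
  have hX₀c : X₀.card = r := rfl
  have hle : ∀ Y ∈ D, Y.card ≤ r := card_le_of_maxFam hDM hX₀
  have hcardmax : ∀ X ∈ maxFam D, X.card = r :=
    fun X hX => le_antisymm (hle X hX.1) (card_le_of_maxFam hDM hX X₀ hX₀D)
  have hmaxD : maxFam D = {X | X ∈ D ∧ X.card = r} := by
    ext X
    constructor
    · intro hX
      exact ⟨hX.1, hcardmax X hX⟩
    · rintro ⟨hXD, hXc⟩
      refine ⟨hXD, fun Y hY hXY => (Finset.eq_of_subset_of_card_le hXY ?_).symm⟩
      rw [hXc]; exact hle Y hY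
  by_cases hA : ∃ X, X ∈ D ∧ X.card = r ∧ v ∉ X
  case pos =>
    obtain ⟨Xa, hXaD, hXac, hXav⟩ := hA
    set Wa := insert v Xa with hWadef
    have hWaP : Wa ∈ pivotSS D {v} := by
      rw [mem_pivot, sd_of_mem (Finset.mem_insert_self v Xa), Finset.erase_insert hXav]
      exact hXaD
    have hWac : Wa.card = r + 1 := by
      rw [hWadef, Finset.card_insert_of_notMem hXav, hXac]
    have hPbound : ∀ W ∈ pivotSS D {v}, W.card ≤ r + 1 := by
      intro W hW
      have hWD := mem_pivot.mp hW
      by_cases hvW : v ∈ W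
      · rw [sd_of_mem hvW] at hWD
        have h1 := Finset.card_erase_add_one hvW
        have h2 := hle _ hWD
        omega
      · rw [sd_of_not_mem hvW] at hWD
        have h1 := Finset.card_insert_of_notMem hvW
        have h2 := hle _ hWD
        omega
    have hPmax : maxCardFam (pivotSS D {v}) = {W | v ∈ W ∧ W.card = r + 1 ∧ W.erase v ∈ D} := by
      ext W
      constructor
      · rintro ⟨hWP, hWmax⟩
        have h1 := hWmax Wa hWaP
        rw [hWac] at h1
        have hWc : W.card = r + 1 := le_antisymm (hPbound W hWP) h1
        have hWD := mem_pivot.mp hWP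
        by_cases hvW : v ∈ W
        · rw [sd_of_mem hvW] at hWD
          exact ⟨hvW, hWc, hWD⟩
        · rw [sd_of_not_mem hvW] at hWD
          have h2 := hle _ hWD
          rw [Finset.card_insert_of_notMem hvW] at h2
          omega
      · rintro ⟨hvW, hWc, hWe⟩
        refine ⟨mem_pivot.mpr (by rwa [sd_of_mem hvW]), fun Y hY => ?_⟩
        rw [hWc]; exact hPbound Y hY
    have hM1L : ∀ W : Finset V, v ∈ W → W.card = r + 1 → W.erase v ∈ D → W ∈ lcSS D v := by
      intro W h1 h2 h3
      have hWnD : W ∉ D := fun hc => by have := hle W hc; omega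
      exact mem_lc.mpr (Or.inr ⟨hWnD, h1, h3⟩)
    have hLbound : ∀ W ∈ lcSS D v, W.card ≤ r + 1 := by
      intro W hW
      rcases mem_lc.mp hW with ⟨hWD, -⟩ | ⟨-, hvW, hWe⟩
      · have := hle W hWD; omega
      · have h1 := hle _ hWe
        have h2 := Finset.card_erase_add_one hvW
        omega
    have hWaL : Wa ∈ lcSS D v :=
      hM1L Wa (Finset.mem_insert_self v Xa) hWac
        (by rw [hWadef, Finset.erase_insert hXav]; exact hXaD)
    have hLmax : maxCardFam (lcSS D v) = {W | v ∈ W ∧ W.card = r + 1 ∧ W.erase v ∈ D} := by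
      ext W
      constructor
      · rintro ⟨hWL, hWmax⟩
        have h1 := hWmax Wa hWaL
        rw [hWac] at h1
        have hWc : W.card = r + 1 := le_antisymm (hLbound W hWL) h1
        rcases mem_lc.mp hWL with ⟨hWD, -⟩ | ⟨-, hvW, hWe⟩
        · have := hle W hWD; omega
        · exact ⟨hvW, hWc, hWe⟩
      · rintro ⟨hvW, hWc, hWe⟩
        refine ⟨hM1L W hvW hWc hWe, fun Y hY => ?_⟩
        rw [hWc]; exact hLbound Y hY
    refine ⟨{W | v ∈ W ∧ W.card = r + 1 ∧ W.erase v ∈ D}, {X | X ∈ D ∧ X.card = r},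
      Or.inr (Or.inr ⟨by rw [maxFam_eq_maxCardFam (pivot_DM hDM v), hPmax], hLmax, hmaxD⟩),
      ?_, ?_, ?_, ?_, ?_⟩
    · intro h
      have h1 : Xa ∈ {X | X ∈ D ∧ X.card = r} := ⟨hXaD, hXac⟩
      rw [← h] at h1
      exact hXav h1.1
    · rintro A ⟨-, hA1, -⟩ B ⟨-, hB1, -⟩; rw [hA1, hB1]
    · rintro A ⟨-, hA1⟩ B ⟨-, hB1⟩; rw [hA1, hB1]
    · rintro Y ⟨-, hY1⟩ Z ⟨-, hZ1, -⟩; rw [hY1, hZ1]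
    · ext W
      constructor
      · rintro ⟨Y, ⟨⟨hYD, hYc⟩, hvY⟩, rfl⟩
        show v ∈ Y ∪ {v} ∧ (Y ∪ {v}).card = r + 1 ∧ (Y ∪ {v}).erase v ∈ D
        rw [us]
        exact ⟨Finset.mem_insert_self _ _,
          by rw [Finset.card_insert_of_notMem hvY, hYc],
          by rwa [Finset.erase_insert hvY]⟩
      · rintro ⟨hvW, hWc, hWe⟩
        refine ⟨W.erase v, ⟨⟨hWe, ?_⟩, Finset.notMem_erase _ _⟩, ?_⟩
        · have := Finset.card_erase_add_one hvW; omega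
        · show W.erase v ∪ {v} = W
          rw [us, Finset.insert_erase hvW]
  case neg =>
    push_neg at hA
    have hvX₀ : v ∈ X₀ := hA X₀ hX₀D hX₀c
    have hr1 : 1 ≤ r := hX₀c ▸ Finset.card_pos.mpr ⟨v, hvX₀⟩
    have hext : ∀ Y, Y ∈ D → v ∉ Y → Y.card + 1 = r → insert v Y ∈ D := by
      intro Y hYD hvY hYc
      obtain ⟨W, hW, hYW⟩ := exists_maximal_mem hYD
      have hWc : W.card = r := hcardmax W hW
      have hvW : v ∈ W := hA W hW.1 hWc
      have hsub : insert v Y ⊆ W := Finset.insert_subset hvW hYW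
      have heq : insert v Y = W := Finset.eq_of_subset_of_card_le hsub
        (by rw [hWc, Finset.card_insert_of_notMem hvY]; omega)
      rw [heq]; exact hW.1
    by_cases hB : ∃ Z, Z ∈ D ∧ v ∉ Z ∧ Z.card + 1 = r
    case pos =>
      obtain ⟨Z, hZD, hvZ, hZc⟩ := hB
      have hZP : insert v Z ∈ pivotSS D {v} := mem_pivot.mpr
        (by rw [sd_of_mem (Finset.mem_insert_self v Z), Finset.erase_insert hvZ]; exact hZD)
      have hZPc : (insert v Z).card = r := by
        rw [Finset.card_insert_of_notMem hvZ]; exact hZc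
      have hPbound : ∀ W ∈ pivotSS D {v}, W.card ≤ r := by
        intro W hW
        have hWD := mem_pivot.mp hW
        by_cases hvW : v ∈ W
        · rw [sd_of_mem hvW] at hWD
          by_contra hc
          have h1 := Finset.card_erase_add_one hvW
          have h2 := hle _ hWD
          have h3 : (W.erase v).card = r := by omega
          exact Finset.notMem_erase v W (hA _ hWD h3)
        · rw [sd_of_not_mem hvW] at hWD
          have h1 := hle _ hWD
          rw [Finset.card_insert_of_notMem hvW] at h1
          omega
      have hPsub : ∀ W ∈ maxCardFam (pivotSS D {v}), W ∈ D ∧ W.card = r := by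
        rintro W ⟨hWP, hWmax⟩
        have h0 := hWmax _ hZP
        rw [hZPc] at h0
        have hWc : W.card = r := le_antisymm (hPbound W hWP) h0
        have hWD := mem_pivot.mp hWP
        by_cases hvW : v ∈ W
        · rw [sd_of_mem hvW] at hWD
          have h1 := Finset.card_erase_add_one hvW
          have h2 : insert v (W.erase v) ∈ D :=
            hext _ hWD (Finset.notMem_erase _ _) (by omega)
          rw [Finset.insert_erase hvW] at h2
          exact ⟨h2, hWc⟩
        · rw [sd_of_not_mem hvW] at hWD
          have h1 := hle _ hWD
          rw [Finset.card_insert_of_notMem hvW] at h1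
          omega
      have hB1b : ∀ X, X ∈ D → X.card = r → X.erase v ∈ D := by
        intro X hXD hXc
        have hvX : v ∈ X := hA X hXD hXc
        have hXeP : X.erase v ∈ pivotSS D {v} := mem_pivot.mpr
          (by rw [sd_of_not_mem (Finset.notMem_erase v X), Finset.insert_erase hvX]; exact hXD)
        obtain ⟨W', hW', hsub⟩ := exists_maximal_mem hXeP
        have hW'mc : W' ∈ maxCardFam (pivotSS D {v}) := by
          rw [← maxFam_eq_maxCardFam (pivot_DM hDM v)]; exact hW'
        obtain ⟨hW'D, hW'c⟩ := hPsub W' hW'mc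
        have hvW' : v ∈ W' := hA W' hW'D hW'c
        have hsub2 : X.erase v ⊆ W'.erase v := fun a ha =>
          Finset.mem_erase.mpr ⟨(Finset.mem_erase.mp ha).1, hsub ha⟩
        have h1 := Finset.card_erase_add_one hvX
        have h2 := Finset.card_erase_add_one hvW'
        have heq : X.erase v = W'.erase v :=
          Finset.eq_of_subset_of_card_le hsub2 (by omega)
        have h3 : W'.erase v ∈ D := by
          have h4 := mem_pivot.mp hW'mc.1
          rwa [sd_of_mem hvW'] at h4
        rw [heq]; exact h3
      have hPmax : maxCardFam (pivotSS D {v}) = {X | X ∈ D ∧ X.card = r} := by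
        ext W
        constructor
        · exact hPsub W
        · rintro ⟨hWD, hWc⟩
          have hvW : v ∈ W := hA W hWD hWc
          refine ⟨mem_pivot.mpr (by rw [sd_of_mem hvW]; exact hB1b W hWD hWc), fun Y hY => ?_⟩
          rw [hWc]; exact hPbound Y hY
      have hLbound : ∀ W ∈ lcSS D v, W.card + 1 ≤ r := by
        intro W hW
        rcases mem_lc.mp hW with ⟨hWD, hno⟩ | ⟨hWnD, hvW, hWe⟩
        · have h1 := hle W hWD
          by_contra hc
          have hWc : W.card = r := by omega
          exact hno ⟨hA W hWD hWc, hB1b W hWD hWc⟩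
        · have h1 := Finset.card_erase_add_one hvW
          have h2 := hle _ hWe
          by_contra hc
          have h3 : (W.erase v).card = r ∨ (W.erase v).card + 1 = r := by omega
          rcases h3 with h3 | h3
          · exact Finset.notMem_erase v W (hA _ hWe h3)
          · have h4 := hext _ hWe (Finset.notMem_erase _ _) h3
            rw [Finset.insert_erase hvW] at h4
            exact hWnD h4
      have hZL : Z ∈ lcSS D v := mem_lc.mpr (Or.inl ⟨hZD, fun hc => hvZ hc.1⟩)
      have hM2card : ∀ W ∈ maxCardFam (lcSS D v), W.card + 1 = r := by
        rintro W ⟨hWL, hWmax⟩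
        have h1 := hWmax Z hZL
        have h2 := hLbound W hWL
        omega
      refine ⟨{X | X ∈ D ∧ X.card = r}, maxCardFam (lcSS D v),
        Or.inl ⟨hmaxD, by rw [maxFam_eq_maxCardFam (pivot_DM hDM v), hPmax], rfl⟩,
        ?_, ?_, ?_, ?_, ?_⟩
      · intro h
        have h1 : X₀ ∈ {X | X ∈ D ∧ X.card = r} := ⟨hX₀D, hX₀c⟩
        rw [h] at h1
        have := hM2card X₀ h1
        omega
      · rintro A ⟨-, hA1⟩ B ⟨-, hB1⟩; rw [hA1, hB1]
      · intro A hA1 B hB1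
        have h1 := hM2card A hA1
        have h2 := hM2card B hB1
        omega
      · intro Y hY1 Z1 hZ1
        have h1 := hM2card Y hY1
        rw [h1, hZ1.2]
      · ext W
        constructor
        · rintro ⟨Y, ⟨hYM2, hvY⟩, rfl⟩
          have hYD : Y ∈ D := by
            rcases mem_lc.mp hYM2.1 with ⟨h1, -⟩ | ⟨-, h1, -⟩
            · exact h1
            · exact absurd h1 hvY
          have hYc := hM2card Y hYM2
          show Y ∪ {v} ∈ D ∧ (Y ∪ {v}).card = r
          rw [us]
          exact ⟨hext Y hYD hvY hYc,
            by rw [Finset.card_insert_of_notMem hvY]; exact hYc⟩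
        · rintro ⟨hWD, hWc⟩
          have hvW : v ∈ W := hA W hWD hWc
          have h1 := Finset.card_erase_add_one hvW
          refine ⟨W.erase v,
            ⟨⟨mem_lc.mpr (Or.inl ⟨hB1b W hWD hWc, fun hc => Finset.notMem_erase v W hc.1⟩),
              fun Y hY => by have := hLbound Y hY; omega⟩, Finset.notMem_erase _ _⟩, ?_⟩
          show W.erase v ∪ {v} = W
          rw [us, Finset.insert_erase hvW]
    case neg =>
      push_neg at hB
      have hB2 : ∀ Z, Z ∈ D → v ∉ Z → Z.card + 2 ≤ r := by
        intro Z hZD hvZ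
        have h1 := hle Z hZD
        have h2 := hB Z hZD hvZ
        have h3 : Z.card ≠ r := fun hc => hvZ (hA Z hZD hc)
        omega
      have hPbound : ∀ W ∈ pivotSS D {v}, W.card + 1 ≤ r := by
        intro W hW
        have hWD := mem_pivot.mp hW
        by_cases hvW : v ∈ W
        · rw [sd_of_mem hvW] at hWD
          have h1 := Finset.card_erase_add_one hvW
          have h2 := hB2 _ hWD (Finset.notMem_erase _ _)
          omega
        · rw [sd_of_not_mem hvW] at hWD
          have h1 := hle _ hWD
          rw [Finset.card_insert_of_notMem hvW] at h1
          exact h1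
      have hX₀P : X₀.erase v ∈ pivotSS D {v} := mem_pivot.mpr
        (by rw [sd_of_not_mem (Finset.notMem_erase v X₀), Finset.insert_erase hvX₀]; exact hX₀D)
      have hX₀Pc : (X₀.erase v).card + 1 = r := Finset.card_erase_add_one hvX₀
      have hM2card : ∀ W ∈ maxCardFam (pivotSS D {v}), W.card + 1 = r := by
        rintro W ⟨hWP, hWmax⟩
        have h1 := hWmax _ hX₀P
        have h2 := hPbound W hWP
        omega
      have hLbound : ∀ W ∈ lcSS D v, W.card ≤ r := by
        intro W hW
        rcases mem_lc.mp hW with ⟨hWD, -⟩ | ⟨-, hvW, hWe⟩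
        · exact hle W hWD
        · have h1 := Finset.card_erase_add_one hvW
          have h2 := hB2 _ hWe (Finset.notMem_erase _ _)
          omega
      have hM1L : ∀ W, W ∈ D → W.card = r → W ∈ maxCardFam (lcSS D v) := by
        intro W hWD hWc
        refine ⟨mem_lc.mpr (Or.inl ⟨hWD, fun hc => ?_⟩),
          fun Y hY => by rw [hWc]; exact hLbound Y hY⟩
        have h1 := Finset.card_erase_add_one hc.1
        have h2 := hB2 _ hc.2 (Finset.notMem_erase _ _)
        omega
      have hLmax : maxCardFam (lcSS D v) = {X | X ∈ D ∧ X.card = r} := by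
        ext W
        constructor
        · rintro ⟨hWL, hWmax⟩
          have h1 : r ≤ W.card := hWmax X₀ (hM1L X₀ hX₀D hX₀c).1
          rcases mem_lc.mp hWL with ⟨hWD, -⟩ | ⟨-, hvW, hWe⟩
          · exact ⟨hWD, le_antisymm (hle W hWD) h1⟩
          · have h2 := Finset.card_erase_add_one hvW
            have h3 := hB2 _ hWe (Finset.notMem_erase _ _)
            omega
        · rintro ⟨hWD, hWc⟩
          exact hM1L W hWD hWc
      refine ⟨{X | X ∈ D ∧ X.card = r}, maxCardFam (pivotSS D {v}),
        Or.inr (Or.inl ⟨hmaxD, hLmax, maxFam_eq_maxCardFam (pivot_DM hDM v)⟩),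
        ?_, ?_, ?_, ?_, ?_⟩
      · intro h
        have h1 : X₀ ∈ {X | X ∈ D ∧ X.card = r} := ⟨hX₀D, hX₀c⟩
        rw [h] at h1
        have := hM2card X₀ h1
        omega
      · rintro A ⟨-, hA1⟩ B ⟨-, hB1⟩; rw [hA1, hB1]
      · intro A hA1 B hB1
        have h1 := hM2card A hA1
        have h2 := hM2card B hB1
        omega
      · intro Y hY1 Z1 hZ1
        have h1 := hM2card Y hY1
        rw [h1, hZ1.2]
      · ext W
        constructor
        · rintro ⟨Y, ⟨hYM2, hvY⟩, rfl⟩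
          have hYD : insert v Y ∈ D := by
            have h1 := mem_pivot.mp hYM2.1
            rwa [sd_of_not_mem hvY] at h1
          have hYc := hM2card Y hYM2
          show Y ∪ {v} ∈ D ∧ (Y ∪ {v}).card = r
          rw [us]
          exact ⟨hYD, by rw [Finset.card_insert_of_notMem hvY]; exact hYc⟩
        · rintro ⟨hWD, hWc⟩
          have hvW : v ∈ W := hA W hWD hWc
          have h1 := Finset.card_erase_add_one hvW
          refine ⟨W.erase v,
            ⟨⟨mem_pivot.mpr
                (by rw [sd_of_not_mem (Finset.notMem_erase v W), Finset.insert_erase hvW]; exact hWD),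
              fun Y hY => by have := hPbound Y hY; omega⟩, Finset.notMem_erase _ _⟩, ?_⟩
          show W.erase v ∪ {v} = W
          rw [us, Finset.insert_erase hvW]
end

section
/- Let F be a field, V a finite set, and A a V × V matrix over F that is symmetric or skew-symmetric. Then for every X ⊆ V, d_{M_A}(X) = n(A[X]), i.e., the distance from X to the set system M_A equals the nullity of the principal submatrix A[X]. -/
open scoped symmDiff

variable {V : Type*} [DecidableEq V] [Fintype V]

section AuxRank
open Matrix Finset Submodule Set

variable {F : Type*} [Field F]

variable {F : Type*} [Field F]

lemma aux_submatrix_eq_mul {m n m' n' : Type*}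
    [Fintype m] [Fintype n] [DecidableEq m] [DecidableEq n] [Fintype m'] [Fintype n']
    (A : Matrix m n F) (f : m' → m) (g : n' → n) :
    A.submatrix f g =
      (1 : Matrix m m F).submatrix f id * A * (1 : Matrix n n F).submatrix id g := by
  ext i j
  simp [Matrix.mul_apply, Matrix.one_apply, Finset.sum_ite_eq]

lemma aux_rank_submatrix_le {m n m' n' : Type*}
    [Fintype m] [Fintype n] [DecidableEq m] [DecidableEq n] [Fintype m'] [Fintype n']
    (A : Matrix m n F) (f : m' → m) (g : n' → n) :
    (A.submatrix f g).rank ≤ A.rank := by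
  rw [aux_submatrix_eq_mul A f g]
  exact le_trans (Matrix.rank_mul_le_left _ _)
    (Matrix.rank_mul_le_right _ _)

lemma aux_rank_le_rows {m n : Type*} [Fintype m] [Fintype n] [DecidableEq m]
    (B : Matrix m n F) (s : Finset m) :
    B.rank ≤ (B.submatrix ((↑) : s → m) id).rank + sᶜ.card := by
  classical
  rw [Matrix.rank_eq_finrank_span_row, Matrix.rank_eq_finrank_span_row]
  unfold Matrix.row
  have h1 : Submodule.span F (Set.range B) ≤
      Submodule.span F (Set.range (B.submatrix ((↑) : s → m) id)) ⊔
      Submodule.span F (B '' ↑sᶜ) := by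
    rw [Submodule.span_le]
    rintro v ⟨i, rfl⟩
    by_cases hi : i ∈ s
    · exact Submodule.mem_sup_left (Submodule.subset_span ⟨⟨i, hi⟩, rfl⟩)
    · exact Submodule.mem_sup_right (Submodule.subset_span ⟨i, by simp [hi], rfl⟩)
  refine le_trans (Submodule.finrank_mono h1) ?_
  refine le_trans (Submodule.finrank_add_le_finrank_add_finrank _ _) ?_
  gcongr
  have h2 : B '' ↑sᶜ = Set.range (fun i : (sᶜ : Finset m) => B i) := by
    ext v; constructor
    · rintro ⟨i, hi, rfl⟩; exact ⟨⟨i, by simpa using hi⟩, rfl⟩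
    · rintro ⟨i, rfl⟩; exact ⟨i, Finset.mem_coe.2 i.2, rfl⟩
  rw [h2]
  rw [Finset.card_compl]
  simpa [Set.finrank] using finrank_range_le_card (R := F) (fun i : (sᶜ : Finset m) => B i)

lemma aux_det_ne_zero_iff_rank {m : Type*} [Fintype m] [DecidableEq m] (B : Matrix m m F) :
    B.det ≠ 0 ↔ B.rank = Fintype.card m := by
  constructor
  · intro h
    exact Matrix.rank_of_isUnit B (Matrix.isUnit_iff_isUnit_det B |>.2 (isUnit_iff_ne_zero.2 h))
  · intro h
    have hli : LinearIndependent F (fun i => Bᵀ i) := by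
      rw [linearIndependent_iff_card_eq_finrank_span]
      rw [Matrix.rank_eq_finrank_span_cols] at h
      rw [← h]; rfl
    have := Matrix.linearIndependent_cols_iff_isUnit.1 hli
    rw [Matrix.isUnit_iff_isUnit_det, isUnit_iff_ne_zero] at this
    exact this

lemma aux_span_neg {m : Type*} (t : Set (m → F)) :
    Submodule.span F ((fun v => -v) '' t) = Submodule.span F t := by
  apply le_antisymm
  · rw [Submodule.span_le]
    rintro v ⟨w, hw, rfl⟩
    exact Submodule.neg_mem _ (Submodule.subset_span hw)
  · rw [Submodule.span_le]
    intro v hv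
    have : v = -(-v) := by simp
    rw [this]
    exact Submodule.neg_mem _ (Submodule.subset_span ⟨v, hv, rfl⟩)

lemma aux_exists_principal {m : Type*} [Fintype m] [DecidableEq m] (B : Matrix m m F)
    (hB : Bᵀ = B ∨ Bᵀ = -B) :
    ∃ s : Finset m, s.card = B.rank ∧
      (B.submatrix ((↑) : s → m) ((↑) : s → m)).det ≠ 0 := by
  classical
  obtain ⟨b, hb_sub, hb_span, hb_li⟩ := exists_linearIndependent F (Set.range Bᵀ)
  have hfin : b.Finite := Set.Finite.subset (Set.finite_range Bᵀ) hb_sub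
  haveI : Fintype b := hfin.fintype
  have hf : ∀ v : b, ∃ j : m, Bᵀ j = (v : m → F) := fun v => hb_sub v.2
  choose f hf' using hf
  have hf_inj : Function.Injective f := by
    intro v w h
    apply Subtype.ext
    rw [← hf' v, ← hf' w, h]
  set s : Finset m := Finset.univ.image f with hs
  have hs_mem : ∀ j : m, j ∈ s ↔ ∃ v : b, f v = j := by
    intro j; simp [hs]
  have hcard : s.card = Fintype.card b := by
    rw [hs, Finset.card_image_of_injective _ hf_inj, Finset.card_univ]
  have himage : Bᵀ '' ↑s = b := by
    ext v
    constructor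
    · rintro ⟨j, hj, rfl⟩
      obtain ⟨w, rfl⟩ := (hs_mem j).1 hj
      rw [hf' w]; exact w.2
    · intro hv
      exact ⟨f ⟨v, hv⟩, (hs_mem _).2 ⟨⟨v, hv⟩, rfl⟩, hf' ⟨v, hv⟩⟩
  have hcard_rank : s.card = B.rank := by
    rw [hcard, Matrix.rank_eq_finrank_span_cols, Matrix.col, ← hb_span,
      finrank_span_set_eq_card (hb_li), Set.toFinset_card]
  -- Step A : rank of the column-selected matrix equals rank of B
  have hstepA : (B.submatrix id ((↑) : s → m)).rank = B.rank := by
    rw [Matrix.rank_eq_finrank_span_cols, Matrix.rank_eq_finrank_span_cols]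
    unfold Matrix.col
    have hset : Set.range (B.submatrix id ((↑) : s → m))ᵀ = Bᵀ '' ↑s := by
      ext v
      constructor
      · rintro ⟨j, rfl⟩; exact ⟨(j : m), j.2, rfl⟩
      · rintro ⟨j, hj, rfl⟩; exact ⟨⟨j, hj⟩, rfl⟩
    rw [hset, himage, hb_span]
  -- Step B : rows indexed by s span the row space of B
  have hstepB : Submodule.span F (B '' ↑s) = Submodule.span F (Set.range B) := by
    rcases hB with h | h
    · have h1 : B '' ↑s = Bᵀ '' ↑s := by rw [h]
      have h2 : Set.range B = Set.range Bᵀ := by rw [h]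
      rw [h1, h2, himage, hb_span]
    · have hneg : ∀ j, (fun v : m → F => -v) (Bᵀ j) = B j := by
        intro j; funext k; simp [h]
      have h1 : B '' ↑s = (fun v => -v) '' (Bᵀ '' ↑s) := by
        exact (Set.image_congr' (fun j => (hneg j).symm)).trans (Set.image_comp _ _ _)
      have h2 : Set.range B = (fun v => -v) '' (Set.range Bᵀ) := by
        have hc : (fun v : m → F => -v) ∘ Bᵀ = B := funext hneg
        exact (congrArg Set.range hc).symm.trans (Set.range_comp _ _)
      rw [h1, h2, aux_span_neg, aux_span_neg, himage, hb_span]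
  -- Step C : principal submatrix has same rank as the column-selected matrix
  have hstepC : (B.submatrix ((↑) : s → m) ((↑) : s → m)).rank
      = (B.submatrix id ((↑) : s → m)).rank := by
    rw [Matrix.rank_eq_finrank_span_row, Matrix.rank_eq_finrank_span_row]
    unfold Matrix.row
    set L : (m → F) →ₗ[F] (s → F) := LinearMap.funLeft F F ((↑) : s → m) with hL
    have hr1 : Set.range (B.submatrix ((↑) : s → m) ((↑) : s → m)) = L '' (B '' ↑s) := by
      ext v
      constructor
      · rintro ⟨i, rfl⟩; exact ⟨B (i : m), ⟨(i : m), i.2, rfl⟩, rfl⟩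
      · rintro ⟨w, ⟨i, hi, rfl⟩, rfl⟩; exact ⟨⟨i, hi⟩, rfl⟩
    have hr2 : Set.range (B.submatrix id ((↑) : s → m)) = L '' (Set.range B) := by
      ext v
      constructor
      · rintro ⟨i, rfl⟩; exact ⟨B i, ⟨i, rfl⟩, rfl⟩
      · rintro ⟨w, ⟨i, rfl⟩, rfl⟩; exact ⟨i, rfl⟩
    rw [hr1, hr2, Submodule.span_image, Submodule.span_image, hstepB]
  refine ⟨s, hcard_rank, ?_⟩
  rw [aux_det_ne_zero_iff_rank, hstepC, hstepA, ← hcard_rank, Fintype.card_coe]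

lemma aux_rank_le_cols {m n : Type*} [Fintype m] [Fintype n] [DecidableEq n]
    (B : Matrix m n F) (s : Finset n) :
    B.rank ≤ (B.submatrix id ((↑) : s → n)).rank + sᶜ.card := by
  rw [← Matrix.rank_transpose B, ← Matrix.rank_transpose (B.submatrix id ((↑) : s → n)),
    Matrix.transpose_submatrix]
  exact aux_rank_le_rows Bᵀ s

end AuxRank

set_option maxHeartbeats 1000000 in
open Matrix in
/-- for a symmetric or skew-symmetric matrix `A` over a field,
the distance `d_{M_A}(X)` equals the nullity of the principal submatrix `A[X]`. -/
theorem dist_eq_nullity {F : Type*} [Field F] (A : Matrix V V F)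
    (hA : A.IsSymm ∨ Aᵀ = -A) (X : Finset V) :
    dSS {Y : Finset V |
        (A.submatrix (fun i : Y => (i : V)) (fun i : Y => (i : V))).det ≠ 0} X =
      X.card - (A.submatrix (fun i : X => (i : V)) (fun i : X => (i : V))).rank := by
  classical
  set B : Matrix {x // x ∈ X} {x // x ∈ X} F :=
    A.submatrix (fun i : X => (i : V)) (fun i : X => (i : V)) with hBdef
  have hB : Bᵀ = B ∨ Bᵀ = -B := by
    rcases hA with h | h
    · left; rw [hBdef, Matrix.transpose_submatrix, h]
    · right
      rw [hBdef, Matrix.transpose_submatrix, h]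
      ext i j; simp
  obtain ⟨s, hscard, hsdet⟩ := aux_exists_principal B hB
  set Y : Finset V := s.image (Subtype.val) with hY
  have hYX : Y ⊆ X := by
    intro y hy
    rw [hY] at hy
    simp only [Finset.mem_image] at hy
    obtain ⟨i, _, rfl⟩ := hy
    exact i.2
  have hYcard : Y.card = s.card := Finset.card_image_of_injective _ Subtype.val_injective
  have hmem : ∀ i : {x // x ∈ X}, (i : V) ∈ Y ↔ i ∈ s := by
    intro i
    simp only [hY, Finset.mem_image]
    constructor
    · rintro ⟨j, hj, hji⟩
      rwa [← Subtype.ext hji]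
    · intro hi; exact ⟨i, hi, rfl⟩
  let e : {y // y ∈ Y} ≃ {i : {x // x ∈ X} // i ∈ s} :=
    { toFun := fun y => ⟨⟨y.1, hYX y.2⟩, (hmem ⟨y.1, hYX y.2⟩).1 y.2⟩
      invFun := fun i => ⟨(i.1 : V), (hmem i.1).2 i.2⟩
      left_inv := fun y => rfl
      right_inv := fun i => by ext; rfl }
  have hYdet : (A.submatrix (fun i : Y => (i : V)) (fun i : Y => (i : V))).det ≠ 0 := by
    have heq : A.submatrix (fun i : Y => (i : V)) (fun i : Y => (i : V))
        = (B.submatrix ((↑) : s → {x // x ∈ X}) ((↑) : s → {x // x ∈ X})).submatrix e e := by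
      ext i j
      rfl
    rw [heq, Matrix.det_submatrix_equiv_self]
    exact hsdet
  have hYval : (X ∆ Y).card = X.card - B.rank := by
    rw [symmDiff_of_ge hYX, Finset.card_sdiff_of_subset hYX, hYcard, hscard]
  -- lower bound
  have hlb : ∀ Z : Finset V,
      (A.submatrix (fun i : Z => (i : V)) (fun i : Z => (i : V))).det ≠ 0 →
      X.card - B.rank ≤ (X ∆ Z).card := by
    intro Z hZdet
    set CZ : Matrix {z // z ∈ Z} {z // z ∈ Z} F :=
      A.submatrix (fun i : Z => (i : V)) (fun i : Z => (i : V)) with hCZ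
    have hZrank : CZ.rank = Z.card := by
      rw [(aux_det_ne_zero_iff_rank CZ).1 hZdet, Fintype.card_coe]
    set s' : Finset {z // z ∈ Z} := Finset.univ.filter (fun i => (i : V) ∈ X) with hs'
    have hs'card : s'.card = (Z ∩ X).card := by
      rw [← Finset.card_image_of_injective s' Subtype.val_injective]
      congr 1
      ext z
      simp only [hs', Finset.mem_image, Finset.mem_inter, Finset.mem_filter,
        Finset.mem_univ, true_and, Subtype.exists, exists_and_left, exists_prop,
        exists_eq_right_right]
      tauto
    have hs'compl : s'ᶜ.card = (Z \ X).card := by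
      rw [← Finset.card_image_of_injective s'ᶜ Subtype.val_injective]
      congr 1
      ext z
      simp only [hs', Finset.compl_filter, Finset.mem_image, Finset.mem_sdiff,
        Finset.mem_filter, Finset.mem_univ, true_and, Subtype.exists, exists_and_left,
        exists_prop, exists_eq_right_right]
      tauto
    have h1 : CZ.rank ≤ (CZ.submatrix ((↑) : s' → _) id).rank + s'ᶜ.card :=
      aux_rank_le_rows CZ s'
    have h2 : (CZ.submatrix ((↑) : s' → _) id).rank
        ≤ (CZ.submatrix ((↑) : s' → _) ((↑) : s' → _)).rank + s'ᶜ.card := by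
      simpa [Matrix.submatrix_submatrix] using
        aux_rank_le_cols (CZ.submatrix ((↑) : s' → _) id) s'
    have h3 : (CZ.submatrix ((↑) : s' → _) ((↑) : s' → _)).rank ≤ B.rank := by
      have heq : CZ.submatrix ((↑) : s' → _) ((↑) : s' → _)
          = B.submatrix
            (fun i : s' => (⟨((i : {z // z ∈ Z}) : V),
              (Finset.mem_filter.1 i.2).2⟩ : {x // x ∈ X}))
            (fun i : s' => (⟨((i : {z // z ∈ Z}) : V),
              (Finset.mem_filter.1 i.2).2⟩ : {x // x ∈ X})) := by
        ext i j; rfl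
      rw [heq]
      exact aux_rank_submatrix_le B _ _
    have hchain : Z.card ≤ B.rank + 2 * (Z \ X).card := by
      rw [← hZrank]
      calc CZ.rank ≤ (CZ.submatrix ((↑) : s' → _) id).rank + s'ᶜ.card := h1
        _ ≤ ((CZ.submatrix ((↑) : s' → _) ((↑) : s' → _)).rank + s'ᶜ.card) + s'ᶜ.card := by
            omega
        _ ≤ B.rank + 2 * (Z \ X).card := by rw [hs'compl] at *; omega
    have hZX1 : (Z ∩ X).card + (Z \ X).card = Z.card := by
      rw [add_comm]; exact Finset.card_sdiff_add_card_inter Z X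
    have hXZ1 : (X ∩ Z).card + (X \ Z).card = X.card := by
      rw [add_comm]; exact Finset.card_sdiff_add_card_inter X Z
    have hinter : (X ∩ Z).card = (Z ∩ X).card := by rw [Finset.inter_comm]
    have hsd : (X ∆ Z).card = (X \ Z).card + (Z \ X).card := by
      rw [symmDiff_def, Finset.sup_eq_union,
        Finset.card_union_of_disjoint (disjoint_sdiff_sdiff)]
    omega
  apply le_antisymm
  · exact Nat.sInf_le ⟨Y, hYdet, hYval⟩
  · refine le_csInf ⟨_, ⟨Y, hYdet, rfl⟩⟩ ?_
    rintro b ⟨Z, hZ, rfl⟩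
    exact hlb Z hZ
end

section
/- Let G be a symmetric V × V matrix over GF(2) (a graph with loops allowed) having a looped vertex v (i.e., G_{vv} = 1). Then among the three nullities n(G), n(G*v), n(G+v), precisely two are equal to some value m and the third equals m + 1. -/
open scoped symmDiff

variable {V : Type*} [DecidableEq V] [Fintype V]

/-- Loop complementation on a graph (symmetric matrix over GF(2)): add `1` to
the diagonal entry at `v`. -/
def loopCompl (G : Matrix V V (ZMod 2)) (v : V) : Matrix V V (ZMod 2) :=
  G + Matrix.single v v 1

/-- Pivot (local complementation) of a graph on a looped vertex `v`. -/
def locCompl (G : Matrix V V (ZMod 2)) (v : V) : Matrix V V (ZMod 2) :=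
  Matrix.of fun x y => if x = v ∨ y = v then G x y else G x y + G x v * G v y

/-- Nullity of a square matrix over GF(2). -/
noncomputable def nullity {n : Type*} [Fintype n] [DecidableEq n]
    (A : Matrix n n (ZMod 2)) : ℕ :=
  Fintype.card n - A.rank

section NullityAux

open Matrix LinearMap Module

set_option linter.unusedSectionVars false

variable {V : Type*} [DecidableEq V] [Fintype V]

local notation "F2" => ZMod 2

/-- The set `{x | G.mulVec x = x v • w}` as a submodule. -/
noncomputable def KwSub (G : Matrix V V F2) (v : V) (w : V → F2) :
    Submodule F2 (V → F2) :=
  LinearMap.ker (G.mulVecLin - (LinearMap.proj v : (V → F2) →ₗ[F2] F2).smulRight w)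

lemma mem_KwSub {G : Matrix V V F2} {v : V} {w : V → F2} {x : V → F2} :
    x ∈ KwSub G v w ↔ G.mulVec x = x v • w := by
  simp [KwSub, LinearMap.mem_ker, sub_eq_zero, LinearMap.smulRight_apply]

noncomputable def Bsub (G : Matrix V V F2) (v : V) : Submodule F2 (V → F2) :=
  LinearMap.ker G.mulVecLin ⊓ LinearMap.ker (LinearMap.proj v : (V → F2) →ₗ[F2] F2)

lemma KwSub_inf (G : Matrix V V F2) (v : V) (w : V → F2) :
    KwSub G v w ⊓ LinearMap.ker (LinearMap.proj v : (V → F2) →ₗ[F2] F2) = Bsub G v := by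
  ext x
  simp only [Submodule.mem_inf, mem_KwSub, Bsub, LinearMap.mem_ker, mulVecLin_apply,
    LinearMap.proj_apply]
  constructor
  · rintro ⟨h1, h2⟩; exact ⟨by simpa [h2] using h1, h2⟩
  · rintro ⟨h1, h2⟩; exact ⟨by simp [h1, h2], h2⟩

lemma finrank_KwSub (G : Matrix V V F2) (v : V) (w : V → F2) :
    finrank F2 (KwSub G v w) =
      finrank F2 (Bsub G v) +
        (finrank F2 (LinearMap.range
          ((LinearMap.proj v : (V → F2) →ₗ[F2] F2).comp (KwSub G v w).subtype))) := by
  have h := LinearMap.finrank_range_add_finrank_ker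
    ((LinearMap.proj v : (V → F2) →ₗ[F2] F2).comp (KwSub G v w).subtype)
  have hker : finrank F2 (LinearMap.ker
      ((LinearMap.proj v : (V → F2) →ₗ[F2] F2).comp (KwSub G v w).subtype)) =
      finrank F2 (Bsub G v) := by
    rw [LinearMap.ker_comp]
    rw [← Submodule.finrank_map_subtype_eq (KwSub G v w)]
    rw [Submodule.map_comap_subtype, KwSub_inf]
  omega

lemma finrank_KwSub_of_exists {G : Matrix V V F2} {v : V} {w : V → F2}
    (h : ∃ x, G.mulVec x = x v • w ∧ x v = 1) :
    finrank F2 (KwSub G v w) = finrank F2 (Bsub G v) + 1 := by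
  rw [finrank_KwSub]
  congr 1
  obtain ⟨x, hx, hxv⟩ := h
  have hmem : (1 : F2) ∈ LinearMap.range
      ((LinearMap.proj v : (V → F2) →ₗ[F2] F2).comp (KwSub G v w).subtype) :=
    ⟨⟨x, mem_KwSub.mpr hx⟩, hxv⟩
  have : LinearMap.range ((LinearMap.proj v : (V → F2) →ₗ[F2] F2).comp
      (KwSub G v w).subtype) = ⊤ := by
    rw [eq_top_iff]
    intro a _
    rcases (by decide : ∀ a : F2, a = 0 ∨ a = 1) a with h0 | h1
    · simp [h0]
    · simpa [h1] using hmem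
  rw [this, finrank_top, finrank_self]

lemma finrank_KwSub_of_not {G : Matrix V V F2} {v : V} {w : V → F2}
    (h : ¬ ∃ x, G.mulVec x = x v • w ∧ x v = 1) :
    finrank F2 (KwSub G v w) = finrank F2 (Bsub G v) := by
  rw [finrank_KwSub]
  have : LinearMap.range ((LinearMap.proj v : (V → F2) →ₗ[F2] F2).comp
      (KwSub G v w).subtype) = ⊥ := by
    rw [eq_bot_iff]
    rintro a ⟨⟨x, hx⟩, rfl⟩
    simp only [LinearMap.comp_apply, Submodule.coe_subtype, LinearMap.proj_apply,
      Submodule.mem_bot]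
    rcases (by decide : ∀ a : F2, a = 0 ∨ a = 1) (x v) with h0 | h1
    · exact h0
    · exact absurd ⟨x, mem_KwSub.mp hx, h1⟩ h
  rw [this, finrank_bot, add_zero]

lemma add_eq_zero_iff_f2 {a b : V → F2} : a + b = 0 ↔ a = b := by
  constructor
  · intro h; funext y
    have h2 := congrFun h y
    simp only [Pi.add_apply, Pi.zero_apply] at h2
    revert h2; generalize a y = p; generalize b y = q; revert p q; decide
  · rintro rfl; funext y; simp only [Pi.add_apply, Pi.zero_apply]
    generalize a y = p; revert p; decide

lemma nullity_eq_finrank_ker (A : Matrix V V F2) :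
    nullity A = finrank F2 (LinearMap.ker A.mulVecLin) := by
  have h := LinearMap.finrank_range_add_finrank_ker A.mulVecLin
  rw [Module.finrank_fintype_fun_eq_card] at h
  rw [nullity, Matrix.rank]
  omega

lemma ker_eq_Kw_zero (G : Matrix V V F2) (v : V) :
    LinearMap.ker G.mulVecLin = KwSub G v 0 := by
  ext x; simp [mem_KwSub, LinearMap.mem_ker]

lemma ker_loopCompl (G : Matrix V V F2) (v : V) :
    LinearMap.ker (loopCompl G v).mulVecLin = KwSub G v (Pi.single v 1) := by
  ext x
  have hmv : (loopCompl G v).mulVec x = G.mulVec x + x v • (Pi.single v 1 : V → F2) := by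
    funext y
    simp only [loopCompl, Matrix.add_mulVec, Pi.add_apply]
    congr 1
    by_cases hy : v = y
    · subst hy
      simp [Matrix.mulVec, dotProduct, Matrix.single, ite_and,
        Finset.sum_ite_eq, Pi.single_apply, mul_comm]
    · simp [Matrix.mulVec, dotProduct, Matrix.single, ite_and, hy,
        Pi.single_apply, Ne.symm hy]
  rw [LinearMap.mem_ker, mulVecLin_apply, hmv, mem_KwSub, add_eq_zero_iff_f2]

end NullityAux
section NullityAux2

open Matrix LinearMap Module

set_option linter.unusedSectionVars false

variable {V : Type*} [DecidableEq V] [Fintype V]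

local notation "F2" => ZMod 2

lemma f2_two_eq_zero : (1 : F2) + 1 = 0 := by decide

lemma f2_self_add (p : ZMod 2) : p + p = 0 := by revert p; decide

lemma locCompl_mulVec {G : Matrix V V F2} {v : V} (hv : G v v = 1) (x : V → F2) :
    (locCompl G v).mulVec x = G.mulVec x +
      ((G.mulVec x) v + x v) • (G.mulVec (Pi.single v 1 : V → F2) + Pi.single v 1) := by
  funext y
  have hsingle : G.mulVec (Pi.single v 1 : V → F2) = fun i => G i v := by
    funext i
    simp [Matrix.mulVec_single]
  by_cases hy : y = v
  · subst hy
    simp only [locCompl, Matrix.mulVec, dotProduct, Matrix.of_apply, Pi.add_apply,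
      Pi.smul_apply, hsingle, Pi.single_apply, smul_eq_mul, true_or, if_true, hv,
      eq_self_iff_true, f2_two_eq_zero, mul_zero, add_zero]
  · simp only [locCompl, Matrix.mulVec, dotProduct, Matrix.of_apply, Pi.add_apply,
      Pi.smul_apply, hsingle, Pi.single_apply, if_neg hy, smul_eq_mul, add_zero]
    have hterm : ∀ z : V, (if y = v ∨ z = v then G y z else G y z + G y v * G v z) * x z
        = G y z * x z + (G y v * G v z * x z + if z = v then G y v * G v z * x z else 0) := by
      intro z
      by_cases hz : z = v
      · subst hz
        simp only [or_true, if_true, eq_self_iff_true]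
        rw [f2_self_add, add_zero]
      · simp only [hy, hz, or_self, if_false, if_neg hz]
        ring
    rw [Finset.sum_congr rfl (fun z _ => hterm z)]
    rw [Finset.sum_add_distrib, Finset.sum_add_distrib]
    rw [Finset.sum_ite_eq' Finset.univ v (fun z => G y v * G v z * x z)]
    simp only [Finset.mem_univ, if_pos, hv, mul_one]
    congr 1
    rw [add_mul, Finset.sum_mul]
    congr 1
    · exact Finset.sum_congr rfl fun z _ => by ring
    · ring

lemma ker_locCompl {G : Matrix V V F2} {v : V} (hv : G v v = 1) :
    LinearMap.ker (locCompl G v).mulVecLin =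
      KwSub G v (G.mulVec (Pi.single v 1 : V → F2) + Pi.single v 1) := by
  ext x
  rw [LinearMap.mem_ker, mulVecLin_apply, locCompl_mulVec hv, mem_KwSub]
  set w : V → F2 := G.mulVec (Pi.single v 1 : V → F2) + Pi.single v 1 with hw
  have hwv : w v = 0 := by
    simp [hw, Matrix.mulVec_single, hv, Pi.single_apply, f2_two_eq_zero]
  rw [add_eq_zero_iff_f2]
  constructor
  · intro h
    have hGv : (G.mulVec x) v = 0 := by
      have := congrFun h v
      simpa [hwv] using this
    rw [h, hGv, zero_add]
  · intro h
    have hGv : (G.mulVec x) v = 0 := by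
      rw [h]; simp [hwv]
    rw [hGv, zero_add, h]

end NullityAux2
section NullityAux3

open Matrix LinearMap Module

set_option linter.unusedSectionVars false

variable {V : Type*} [DecidableEq V] [Fintype V]

local notation "F2" => ZMod 2

/-- If `G` is symmetric, `Gz = 0` and `e_v` is in the range of `G`, then `z v = 0`. -/
lemma kerVanish {G : Matrix V V F2} (hG : G.IsSymm) {v : V} {z x : V → F2}
    (hz : G.mulVec z = 0) (hx : G.mulVec x = Pi.single v 1) : z v = 0 := by
  have h1 : z ⬝ᵥ G.mulVec x = z v := by
    rw [hx, dotProduct_single, mul_one]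
  have h2 : z ⬝ᵥ G.mulVec x = 0 := by
    rw [Matrix.dotProduct_mulVec]
    have : Matrix.vecMul z G = G.mulVec z := by
      rw [← Matrix.mulVec_transpose, hG.eq]
    rw [this, hz, zero_dotProduct]
  rw [← h1, h2]

/-- If every kernel vector of symmetric `G` vanishes at `v`, then `e_v` is in the range. -/
lemma exists_mulVec_single {G : Matrix V V F2} (hG : G.IsSymm) {v : V}
    (h : ∀ z, G.mulVec z = 0 → z v = 0) :
    ∃ x, G.mulVec x = Pi.single v 1 := by
  set M := G.mulVecLin with hM
  have hker : LinearMap.ker M ≤ LinearMap.ker (LinearMap.proj v : (V → F2) →ₗ[F2] F2) := by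
    intro z hz
    exact h z hz
  -- functional on the quotient
  let q : ((V → F2) ⧸ LinearMap.ker M) →ₗ[F2] F2 :=
    Submodule.liftQ (LinearMap.ker M) (LinearMap.proj v) hker
  let eqv : ((V → F2) ⧸ LinearMap.ker M) ≃ₗ[F2] LinearMap.range M := M.quotKerEquivRange
  let f0 : (LinearMap.range M) →ₗ[F2] F2 := q.comp (eqv.symm : _ →ₗ[F2] _)
  obtain ⟨hmap, hh⟩ := f0.exists_extend
  have key : ∀ x : V → F2, hmap (G.mulVec x) = x v := by
    intro x
    have hmem : G.mulVec x ∈ LinearMap.range M := ⟨x, rfl⟩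
    have h3 : hmap (G.mulVec x) = f0 ⟨G.mulVec x, hmem⟩ := by
      have := congrFun (congrArg (fun g => g.toFun) hh) ⟨G.mulVec x, hmem⟩
      simpa using this
    rw [h3]
    show q (eqv.symm ⟨G.mulVec x, hmem⟩) = x v
    have : eqv.symm ⟨G.mulVec x, hmem⟩ = Submodule.Quotient.mk x :=
      M.quotKerEquivRange_symm_apply_image x hmem
    rw [this]
    rfl
  -- recover the vector realizing the functional
  refine ⟨fun i => hmap (Pi.single i 1), ?_⟩
  funext y
  have expand : (G.mulVec fun i => hmap (Pi.single i 1)) y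
      = hmap (fun j => G y j) := by
    rw [Matrix.mulVec]
    show (∑ i, G y i * hmap (Pi.single i 1)) = _
    have : (fun j => G y j) = ∑ i, G y i • (Pi.single i 1 : V → F2) := by
      funext j
      simp [Pi.single_apply, Finset.sum_ite_eq]
    rw [this, map_sum]
    apply Finset.sum_congr rfl
    intro i _
    rw [_root_.map_smul, smul_eq_mul]
  have hrow : (fun j => G y j) = G.mulVec (Pi.single y 1 : V → F2) := by
    rw [Matrix.mulVec_single]
    funext j
    change G y j = G j y * 1
    rw [mul_one]
    exact (congrFun (congrFun hG.eq y) j).symm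
  rw [expand, hrow, key]
  simp [Pi.single_apply, eq_comm]

end NullityAux3
/-- for a graph `G` with a looped vertex `v`, among the
nullities `n(G)`, `n(G*v)`, `n(G+v)`, precisely two equal some `m` and the
third equals `m + 1`. -/
theorem nullity_loop_pivot (G : Matrix V V (ZMod 2)) (hG : G.IsSymm)
    (v : V) (hv : G v v = 1) :
    ∃ m : ℕ,
      (nullity G = m ∧ nullity (locCompl G v) = m ∧ nullity (loopCompl G v) = m + 1) ∨
      (nullity G = m ∧ nullity (loopCompl G v) = m ∧ nullity (locCompl G v) = m + 1) ∨
      (nullity (locCompl G v) = m ∧ nullity (loopCompl G v) = m ∧ nullity G = m + 1) := by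
  classical
  set e : V → ZMod 2 := Pi.single v 1 with he
  set w2 : V → ZMod 2 := G.mulVec e + e with hw2
  have hev : e v = 1 := Pi.single_eq_same v 1
  have hselfadd : ∀ a : V → ZMod 2, a + a = 0 := fun a => add_eq_zero_iff_f2.mpr rfl
  have hdi : ∀ a : ZMod 2, a = 0 ∨ a = 1 := by decide
  have hne : (1 : ZMod 2) ≠ 0 := by decide
  have n0 : nullity G = Module.finrank (ZMod 2) (KwSub G v 0) := by
    rw [nullity_eq_finrank_ker, ker_eq_Kw_zero G v]
  have n1 : nullity (loopCompl G v) = Module.finrank (ZMod 2) (KwSub G v e) := by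
    rw [nullity_eq_finrank_ker, ker_loopCompl]
  have n2 : nullity (locCompl G v) = Module.finrank (ZMod 2) (KwSub G v w2) := by
    rw [nullity_eq_finrank_ker, ker_locCompl hv]
  set b := Module.finrank (ZMod 2) (Bsub G v) with hb
  refine ⟨b, ?_⟩
  by_cases hsol : ∃ x, G.mulVec x = e
  · obtain ⟨x0, hx0⟩ := hsol
    have hE0 : ¬ ∃ x, G.mulVec x = x v • (0 : V → ZMod 2) ∧ x v = 1 := by
      rintro ⟨z, hz, hzv⟩
      rw [smul_zero] at hz
      exact hne (by rw [← hzv, kerVanish hG hz hx0])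
    rcases hdi (x0 v) with hx0v | hx0v
    · -- x0 v = 0 : pivot kernel gains a dimension
      have hE2 : ∃ x, G.mulVec x = x v • w2 ∧ x v = 1 := by
        refine ⟨x0 + e, ?_, ?_⟩
        · have hxv : (x0 + e) v = 1 := by simp [Pi.add_apply, hx0v, hev]
          rw [hxv, one_smul, Matrix.mulVec_add, hx0, hw2]
          abel
        · simp [Pi.add_apply, hx0v, hev]
      have hE1 : ¬ ∃ x, G.mulVec x = x v • e ∧ x v = 1 := by
        rintro ⟨x, hx, hxv⟩
        rw [hxv, one_smul] at hx
        have hz : G.mulVec (x + x0) = 0 := by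
          rw [Matrix.mulVec_add, hx, hx0, hselfadd]
        have := kerVanish hG hz hx0
        rw [Pi.add_apply, hxv, hx0v, add_zero] at this
        exact hne this
      refine Or.inr (Or.inl ⟨?_, ?_, ?_⟩)
      · rw [n0, finrank_KwSub_of_not hE0]
      · rw [n1, finrank_KwSub_of_not hE1]
      · rw [n2, finrank_KwSub_of_exists hE2]
    · -- x0 v = 1 : loop-complement kernel gains a dimension
      have hE1 : ∃ x, G.mulVec x = x v • e ∧ x v = 1 :=
        ⟨x0, by rw [hx0v, one_smul, hx0], hx0v⟩
      have hE2 : ¬ ∃ x, G.mulVec x = x v • w2 ∧ x v = 1 := by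
        rintro ⟨x, hx, hxv⟩
        rw [hxv, one_smul, hw2] at hx
        have hz : G.mulVec (x + e + x0) = 0 := by
          rw [Matrix.mulVec_add, Matrix.mulVec_add, hx, hx0]
          have : G.mulVec e + e + G.mulVec e + e = 0 := by
            have h1 : G.mulVec e + e + G.mulVec e + e
                = (G.mulVec e + G.mulVec e) + (e + e) := by abel
            rw [h1, hselfadd, hselfadd, add_zero]
          exact this
        have := kerVanish hG hz hx0
        rw [Pi.add_apply, Pi.add_apply, hxv, hev, hx0v] at this
        revert this; decide
      refine Or.inl ⟨?_, ?_, ?_⟩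
      · rw [n0, finrank_KwSub_of_not hE0]
      · rw [n2, finrank_KwSub_of_not hE2]
      · rw [n1, finrank_KwSub_of_exists hE1]
  · -- no solution to Gx = e : the kernel of G gains a dimension
    have hE0 : ∃ x, G.mulVec x = x v • (0 : V → ZMod 2) ∧ x v = 1 := by
      by_contra hno
      refine hsol (exists_mulVec_single hG ?_)
      intro z hz
      rcases hdi (z v) with h0 | h1
      · exact h0
      · exact absurd ⟨z, by rw [smul_zero]; exact hz, h1⟩ hno
    have hE1 : ¬ ∃ x, G.mulVec x = x v • e ∧ x v = 1 := by
      rintro ⟨x, hx, hxv⟩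
      rw [hxv, one_smul] at hx
      exact hsol ⟨x, hx⟩
    have hE2 : ¬ ∃ x, G.mulVec x = x v • w2 ∧ x v = 1 := by
      rintro ⟨x, hx, hxv⟩
      rw [hxv, one_smul, hw2] at hx
      refine hsol ⟨x + e, ?_⟩
      rw [Matrix.mulVec_add, hx]
      have h1 : G.mulVec e + e + G.mulVec e = e + (G.mulVec e + G.mulVec e) := by abel
      rw [h1, hselfadd, add_zero]
    refine Or.inr (Or.inr ⟨?_, ?_, ?_⟩)
    · rw [n2, finrank_KwSub_of_not hE2]
    · rw [n1, finrank_KwSub_of_not hE1]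
    · rw [n0, finrank_KwSub_of_exists hE0]
end
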